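/- arXiv:1909.01198 — 6 statements merged into one kernel-verified Lean document; each statement's English description precedes it below -/
import Mathlib

section
/- For every T > 3, the number of reduced rationals p/q in the Cantor middle-thirds set with purely periodic base-3 expansion and 0 < q ≤ T is at least T^d / 2, where d = log 2 / log 3. -/
open Finset

lemma digits_inj : ∀ (L : ℕ) (b c : ℕ → ℕ), (∀ j, b j ≤ 2) → (∀ j, c j ≤ 2) →
    (∑ j ∈ range L, b j * 3 ^ j) = (∑ j ∈ range L, c j * 3 ^ j) →
    ∀ j < L, b j = c j := by
  intro L
  induction L with
  | zero => intro b c _ _ _ j hj; omega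
  | succ n ih =>
    intro b c hb hc hsum j hj
    rw [Finset.sum_range_succ', Finset.sum_range_succ'] at hsum
    have h1 : ∑ j ∈ range n, b (j+1) * 3^(j+1) = 3 * ∑ j ∈ range n, b (j+1) * 3^j := by
      rw [Finset.mul_sum]; exact Finset.sum_congr rfl fun k _ => by ring
    have h2 : ∑ j ∈ range n, c (j+1) * 3^(j+1) = 3 * ∑ j ∈ range n, c (j+1) * 3^j := by
      rw [Finset.mul_sum]; exact Finset.sum_congr rfl fun k _ => by ring
    rw [h1, h2] at hsum
    have hb0 := hb 0; have hc0 := hc 0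
    have h0 : b 0 = c 0 ∧ (∑ j ∈ range n, b (j+1) * 3^j) = ∑ j ∈ range n, c (j+1) * 3^j := by
      omega
    rcases Nat.eq_zero_or_pos j with hj0 | hjp
    · rw [hj0]; exact h0.1
    · obtain ⟨k, rfl⟩ : ∃ k, j = k + 1 := ⟨j - 1, by omega⟩
      exact ih (fun i => b (i+1)) (fun i => c (i+1)) (fun i => hb _) (fun i => hc _) h0.2 k
        (by omega)

lemma summable_cantor (a : ℕ → ℕ) (ha : ∀ i, a i ≤ 2) :
    Summable (fun i => (a i : ℝ) / 3 ^ (i + 1)) := by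
  apply Summable.of_nonneg_of_le (fun i => by positivity) (fun i => ?_)
    ((summable_geometric_of_lt_one (by norm_num) (by norm_num : (1/3:ℝ) < 1)).mul_left 2)
  have h1 : ((1:ℝ)/3) ^ i = 1 / 3 ^ i := by rw [div_pow, one_pow]
  rw [h1, mul_one_div]
  exact div_le_div₀ (by norm_num) (by exact_mod_cast ha i) (by positivity)
    (pow_le_pow_right₀ (by norm_num) (Nat.le_succ i))

lemma tsum_periodic (L : ℕ) (hL : 0 < L) (a : ℕ → ℕ) (ha : ∀ i, a i ≤ 2)
    (hper : ∀ i, a (i + L) = a i) :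
    ∑' i, (a i : ℝ) / 3 ^ (i + 1)
      = (∑ j ∈ range L, (a j : ℝ) * 3 ^ (L - 1 - j)) / (3 ^ L - 1) := by
  have hs := summable_cantor a ha
  have hkey := hs.sum_add_tsum_nat_add L
  have hshift : ∀ i : ℕ, (a (i + L) : ℝ) / 3 ^ (i + L + 1)
      = ((a i : ℝ) / 3 ^ (i + 1)) * (1 / 3 ^ L) := by
    intro i
    rw [hper i]
    rw [show i + L + 1 = (i + 1) + L by omega, pow_add]
    field_simp
  have h2 : ∑' i, (a (i + L) : ℝ) / 3 ^ (i + L + 1)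
      = (∑' i, (a i : ℝ) / 3 ^ (i + 1)) * (1 / 3 ^ L) := by
    rw [tsum_congr hshift, tsum_mul_right]
  set x := ∑' i, (a i : ℝ) / 3 ^ (i + 1) with hx
  set P := ∑ j ∈ range L, (a j : ℝ) / 3 ^ (j + 1) with hP
  have heq : P + x * (1 / 3 ^ L) = x := by rw [← h2]; exact hkey
  have h3pos : (3:ℝ) ≤ 3 ^ L := by
    calc (3:ℝ) = 3 ^ 1 := (pow_one 3).symm
    _ ≤ 3 ^ L := pow_le_pow_right₀ (by norm_num) hL
  have h3ne : (3:ℝ) ^ L - 1 ≠ 0 := by linarith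
  have h3ne' : (3:ℝ) ^ L ≠ 0 := by positivity
  have hxval : x = P * 3 ^ L / (3 ^ L - 1) := by
    field_simp at heq ⊢
    linarith
  rw [hxval]
  congr 1
  rw [Finset.sum_mul]
  refine Finset.sum_congr rfl fun j hj => ?_
  have hjL : j < L := Finset.mem_range.mp hj
  have : L = (j + 1) + (L - 1 - j) := by omega
  rw [this, pow_add]
  field_simp
  rw [pow_add, pow_succ]
  ring_nf
  rw [show 1 + j + (L - 1 - j) - 1 - j = L - 1 - j by omega]


/-- The Cantor middle-thirds set. -/
def cantorMiddleThirds : Set ℝ :=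
  {x | ∃ a : ℕ → ℕ, (∀ i, a i = 0 ∨ a i = 2) ∧ x = ∑' i : ℕ, (a i : ℝ) / 3 ^ (i + 1)}

/-- For every `T > 3`, the number of reduced rationals `p/q` in the Cantor set
with purely periodic base-3 expansion and `0 < q ≤ T` is at least
`T^d / 2` where `d = log 2 / log 3`. -/
theorem stmt_5 (T : ℝ) (hT : 3 < T) :
    ∃ S : Finset ℚ,
      (∀ r ∈ S, (r : ℝ) ∈ cantorMiddleThirds ∧ (r.den : ℝ) ≤ T ∧
        ∃ a : ℕ → ℕ, (∀ i, a i = 0 ∨ a i = 2) ∧ (∃ ℓ, 0 < ℓ ∧ ∀ i, a (i + ℓ) = a i) ∧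
          (r : ℝ) = ∑' i : ℕ, (a i : ℝ) / 3 ^ (i + 1)) ∧
      T ^ (Real.log 2 / Real.log 3) / 2 ≤ (S.card : ℝ) := by
  have hT0 : (0:ℝ) < T := by linarith
  set L := Nat.floor (Real.logb 3 T) with hLdef
  have hlogb1 : 1 < Real.logb 3 T := by
    rw [Real.logb, lt_div_iff₀ (Real.log_pos (by norm_num))]
    rw [one_mul]
    exact Real.log_lt_log (by norm_num) hT
  have hL1 : 1 ≤ L := Nat.le_floor (by exact_mod_cast hlogb1.le)
  have hLpos : 0 < L := hL1
  have h3L : (3:ℝ) ^ L ≤ T := by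
    have h1 : (3:ℝ) ^ (L:ℝ) ≤ (3:ℝ) ^ (Real.logb 3 T) := by
      apply (Real.rpow_le_rpow_left_iff (by norm_num : (1:ℝ) < 3)).mpr
      exact Nat.floor_le (by linarith)
    rw [Real.rpow_natCast] at h1
    rwa [Real.rpow_logb (by norm_num) (by norm_num) hT0] at h1
  -- digit sequences
  let seq : (Fin L → Fin 2) → ℕ → ℕ := fun b i => 2 * (b ⟨i % L, Nat.mod_lt i hLpos⟩ : ℕ)
  have hseq2 : ∀ b i, seq b i ≤ 2 := by
    intro b i
    have := (b ⟨i % L, Nat.mod_lt i hLpos⟩).isLt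
    simp only [seq]; omega
  have hseqper : ∀ b i, seq b (i + L) = seq b i := by
    intro b i
    simp only [seq, Nat.add_mod_right]
  -- numerator
  let M : (Fin L → Fin 2) → ℕ := fun b => ∑ j ∈ Finset.range L, seq b j * 3 ^ (L - 1 - j)
  have hMrefl : ∀ b, M b = ∑ j ∈ Finset.range L, seq b (L - 1 - j) * 3 ^ j := by
    intro b
    rw [← Finset.sum_range_reflect]
    refine Finset.sum_congr rfl fun j hj => ?_
    have hjL : j < L := Finset.mem_range.mp hj
    congr 2
    omega
  have hMinj : Function.Injective M := by
    intro b c h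
    rw [hMrefl b, hMrefl c] at h
    have := digits_inj L (fun j => seq b (L - 1 - j)) (fun j => seq c (L - 1 - j))
      (fun j => hseq2 b _) (fun j => hseq2 c _) h
    funext i
    have hi := i.isLt
    have h2 := this (L - 1 - (i : ℕ)) (by omega)
    have hrw : L - 1 - (L - 1 - (i : ℕ)) = (i : ℕ) := by omega
    rw [hrw] at h2
    simp only [seq] at h2
    have hmod : (i:ℕ) % L = (i:ℕ) := Nat.mod_eq_of_lt hi
    have hb := (b ⟨(i:ℕ) % L, Nat.mod_lt _ hLpos⟩).isLt
    have hc := (c ⟨(i:ℕ) % L, Nat.mod_lt _ hLpos⟩).isLt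
    have : b ⟨(i:ℕ) % L, Nat.mod_lt _ hLpos⟩ = c ⟨(i:ℕ) % L, Nat.mod_lt _ hLpos⟩ := by
      apply Fin.ext; omega
    have hcongr : (⟨(i:ℕ) % L, Nat.mod_lt _ hLpos⟩ : Fin L) = i := Fin.ext hmod
    rwa [hcongr] at this
  -- the rationals
  have h3L1 : 1 ≤ 3 ^ L := Nat.one_le_pow _ _ (by norm_num)
  have h3L3 : 3 ≤ 3 ^ L := by
    calc 3 = 3 ^ 1 := rfl
    _ ≤ 3 ^ L := Nat.pow_le_pow_right (by norm_num) hL1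
  let r : (Fin L → Fin 2) → ℚ := fun b => (M b : ℚ) / ((3 ^ L - 1 : ℕ) : ℚ)
  have hden_ne : ((3 ^ L - 1 : ℕ) : ℚ) ≠ 0 := by
    have : (2:ℕ) ≤ 3 ^ L - 1 := by omega
    exact_mod_cast (by omega : (3:ℕ) ^ L - 1 ≠ 0)
  have hrinj : Function.Injective r := by
    intro b c h
    apply hMinj
    simp only [r] at h
    rw [div_eq_div_iff hden_ne hden_ne] at h
    exact_mod_cast mul_right_cancel₀ hden_ne h
  refine ⟨Finset.image r Finset.univ, ?_, ?_⟩
  · intro q hq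
    obtain ⟨b, _, rfl⟩ := Finset.mem_image.mp hq
    have htsum : ((r b : ℚ) : ℝ) = ∑' i : ℕ, (seq b i : ℝ) / 3 ^ (i + 1) := by
      rw [tsum_periodic L hLpos (seq b) (hseq2 b) (hseqper b)]
      have hnum : (∑ j ∈ Finset.range L, (seq b j : ℝ) * 3 ^ (L - 1 - j)) = (M b : ℝ) := by
        simp only [M]
        push_cast
        rfl
      rw [hnum]
      simp only [r]
      push_cast [Nat.cast_sub h3L1]
      ring_nf
    have hdigits : ∀ i, seq b i = 0 ∨ seq b i = 2 := by
      intro i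
      have := (b ⟨i % L, Nat.mod_lt i hLpos⟩).isLt
      simp only [seq]; omega
    refine ⟨⟨seq b, hdigits, htsum⟩, ?_, seq b, hdigits, ⟨L, hLpos, hseqper b⟩, htsum⟩
    -- denominator bound
    have hdvd : ((r b).den : ℤ) ∣ ((3 ^ L - 1 : ℕ) : ℤ) := by
      have : r b = Rat.divInt ((M b : ℤ)) ((3 ^ L - 1 : ℕ) : ℤ) := by
        rw [Rat.divInt_eq_div]; push_cast; rfl
      rw [this]
      exact Rat.den_dvd _ _
    have hdenle : ((r b).den : ℕ) ≤ 3 ^ L - 1 := by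
      have hpos : 0 < 3 ^ L - 1 := by omega
      exact Nat.le_of_dvd hpos (by exact_mod_cast hdvd)
    have : ((r b).den : ℝ) ≤ ((3 ^ L - 1 : ℕ) : ℝ) := by exact_mod_cast hdenle
    refine this.trans ?_
    push_cast [Nat.cast_sub h3L1]
    linarith
  · -- cardinality
    have hcard : (Finset.image r Finset.univ).card = 2 ^ L := by
      rw [Finset.card_image_of_injective _ hrinj, Finset.card_univ]
      simp
    rw [hcard]
    have hTd : T ^ (Real.log 2 / Real.log 3) ≤ 2 ^ ((L:ℝ) + 1) := by
      have hTd_eq : T ^ (Real.log 2 / Real.log 3) = (2:ℝ) ^ (Real.logb 3 T) := by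
        rw [Real.rpow_def_of_pos hT0, Real.rpow_def_of_pos (by norm_num : (0:ℝ) < 2),
          Real.logb]
        ring_nf
      rw [hTd_eq]
      apply Real.rpow_le_rpow_left_iff (by norm_num : (1:ℝ) < 2) |>.mpr
      have := Nat.lt_floor_add_one (Real.logb 3 T)
      push_cast at this ⊢
      linarith
    have h2L : (2:ℝ) ^ ((L:ℝ) + 1) = 2 * 2 ^ L := by
      rw [show ((L:ℝ) + 1) = ((L + 1 : ℕ) : ℝ) by push_cast; ring, Real.rpow_natCast,
        pow_succ]
      ring
    rw [h2L] at hTd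
    push_cast
    linarith
end

section
/- If a reduced rational p/q lies in the Cantor middle-thirds set, q is coprime to 3, and ℓ(q) is the order of 3 mod q, then q divides (3^{ℓ(q)} - 1)/2. -/
open Finset

private lemma summable_two_thirds : Summable (fun i : ℕ => (2:ℝ)/3^(i+1)) := by
  have h : ∀ i : ℕ, (2:ℝ)/3^(i+1) = (2/3) * (1/3)^i := by
    intro i; rw [pow_succ']; field_simp; rw [← mul_pow]; norm_num
  simp only [h]
  exact (summable_geometric_of_lt_one (by norm_num) (by norm_num)).mul_left _

private lemma geom_sum_thirds : ∑' i : ℕ, (2:ℝ)/3^(i+1) = 1 := by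
  have h : ∀ i : ℕ, (2:ℝ)/3^(i+1) = (2/3) * (1/3)^i := by
    intro i; rw [pow_succ']; field_simp; rw [← mul_pow]; norm_num
  simp only [h]
  rw [tsum_mul_left, tsum_geometric_of_lt_one (by norm_num) (by norm_num)]
  norm_num

private lemma summable_digits {b : ℕ → ℕ} (hb : ∀ i, b i ≤ 2) :
    Summable (fun i => (b i : ℝ)/3^(i+1)) := by
  apply Summable.of_nonneg_of_le (fun i => by positivity) _ summable_two_thirds
  intro i
  gcongr
  exact_mod_cast hb i

private lemma tsum_digits_le_one {b : ℕ → ℕ} (hb : ∀ i, b i ≤ 2) :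
    ∑' i : ℕ, (b i : ℝ)/3^(i+1) ≤ 1 := by
  rw [← geom_sum_thirds]
  apply Summable.tsum_le_tsum _ (summable_digits hb) summable_two_thirds
  intro i
  gcongr
  exact_mod_cast hb i

private lemma digit_eq_zero {b : ℕ → ℕ} (hb : ∀ i, b i ≤ 2)
    (h : ∑' i : ℕ, (b i : ℝ)/3^(i+1) = 0) (j : ℕ) : b j = 0 := by
  have h1 : (b j : ℝ)/3^(j+1) ≤ 0 := h ▸ Summable.le_tsum (summable_digits hb) j (fun i _ => by positivity)
  have h2 : (0:ℝ) ≤ (b j : ℝ)/3^(j+1) := by positivity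
  have h3 : (b j : ℝ)/3^(j+1) = 0 := le_antisymm h1 h2
  have h4 : (3:ℝ)^(j+1) ≠ 0 := by positivity
  field_simp at h3
  simpa using h3

private lemma digit_eq_two {b : ℕ → ℕ} (hb : ∀ i, b i ≤ 2)
    (h : ∑' i : ℕ, (b i : ℝ)/3^(i+1) = 1) (j : ℕ) : b j = 2 := by
  have hg : ∑' i : ℕ, ((2:ℝ)/3^(i+1) - (b i : ℝ)/3^(i+1)) = 0 := by
    rw [Summable.tsum_sub summable_two_thirds (summable_digits hb), geom_sum_thirds, h, sub_self]
  have hnn : ∀ i : ℕ, (0:ℝ) ≤ (2:ℝ)/3^(i+1) - (b i : ℝ)/3^(i+1) := by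
    intro i
    have : (b i : ℝ) ≤ 2 := by exact_mod_cast hb i
    have h3 : (0:ℝ) < (3:ℝ)^(i+1) := by positivity
    rw [sub_nonneg]
    gcongr
  have h1 : (2:ℝ)/3^(j+1) - (b j : ℝ)/3^(j+1) ≤ 0 :=
    hg ▸ Summable.le_tsum ((summable_two_thirds).sub (summable_digits hb)) j (fun i _ => hnn i)
  have h2 := hnn j
  have h3 : (b j : ℝ) = 2 := by
    have : (2:ℝ)/3^(j+1) = (b j : ℝ)/3^(j+1) := by linarith
    have h30 : (3:ℝ)^(j+1) ≠ 0 := by positivity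
    field_simp at this
    linarith
  exact_mod_cast h3


/-- If a reduced rational `p/q` lies in the Cantor set and `3 ∤ q`, then
`q` divides `(3^{ℓ(q)} - 1)/2`, where `ℓ(q)` is the order of `3` mod `q`. -/
theorem stmt_11 (p q : ℕ) (hq : 0 < q) (hpq : p ≤ q) (hcop : Nat.Coprime p q)
    (h3 : ¬ 3 ∣ q) (hC : (p : ℝ) / q ∈ cantorMiddleThirds) :
    q ∣ (3 ^ orderOf (3 : ZMod q) - 1) / 2 := by
  haveI : NeZero q := ⟨hq.ne'⟩
  set ℓ := orderOf (3 : ZMod q) with hℓdef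
  -- order is positive and q ∣ 3^ℓ - 1
  have hcop3 : Nat.Coprime 3 q := (Nat.Prime.coprime_iff_not_dvd (by norm_num)).mpr h3
  have hunit : IsUnit (3 : ZMod q) := by
    have := (ZMod.isUnit_iff_coprime 3 q).mpr hcop3
    simpa using this
  have hℓpos : 0 < ℓ := by
    rw [hℓdef, ← hunit.unit_spec, orderOf_units]
    exact orderOf_pos _
  have hpow : (3 : ZMod q)^ℓ = 1 := pow_orderOf_eq_one _
  have h3ℓ : 1 ≤ 3^ℓ := Nat.one_le_pow _ _ (by norm_num)
  have hdvd : q ∣ 3^ℓ - 1 := by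
    have h1 : ((3^ℓ : ℕ) : ZMod q) = ((1:ℕ) : ZMod q) := by push_cast [hpow]; rfl
    have h2 : 1 ≡ 3^ℓ [MOD q] := ((ZMod.natCast_eq_natCast_iff _ _ _).mp h1).symm
    exact (Nat.modEq_iff_dvd' h3ℓ).mp h2
  obtain ⟨M, hM⟩ := hdvd
  -- Cantor digits
  obtain ⟨a, ha, hx⟩ := hC
  have ha2 : ∀ i, a i ≤ 2 := fun i => by rcases ha i with h | h <;> omega
  have hb2 : ∀ i, a (i + ℓ) ≤ 2 := fun i => ha2 _
  set f : ℕ → ℝ := fun i => (a i : ℝ)/3^(i+1) with hfdef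
  have hsum : Summable f := summable_digits ha2
  set S : ℝ := ∑' i : ℕ, (a (i + ℓ) : ℝ)/3^(i+1) with hSdef
  set A : ℕ := ∑ i ∈ range ℓ, a i * 3^(ℓ-1-i) with hAdef
  have hsplit : ∑' i, f i = ∑ i ∈ range ℓ, f i + ∑' i, f (i+ℓ) :=
    (Summable.sum_add_tsum_nat_add ℓ hsum).symm
  have htail : ∑' i, f (i+ℓ) = ((3:ℝ)^ℓ)⁻¹ * S := by
    rw [hSdef, ← tsum_mul_left]
    congr 1 with i
    show (a (i+ℓ):ℝ)/3^(i+ℓ+1) = ((3:ℝ)^ℓ)⁻¹ * ((a (i+ℓ):ℝ)/3^(i+1))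
    rw [show i+ℓ+1 = ℓ + (i+1) from by omega, pow_add]
    have h1 : (3:ℝ)^ℓ ≠ 0 := by positivity
    have h2 : (3:ℝ)^(i+1) ≠ 0 := by positivity
    field_simp
  have hhead : (3:ℝ)^ℓ * ∑ i ∈ range ℓ, f i = (A:ℝ) := by
    rw [Finset.mul_sum, hAdef]
    push_cast
    apply Finset.sum_congr rfl
    intro i hi
    have hiℓ : i < ℓ := mem_range.mp hi
    have he : ℓ = (ℓ - 1 - i) + (i+1) := by omega
    conv_lhs => rw [he]
    rw [pow_add]
    have h2 : (3:ℝ)^(i+1) ≠ 0 := by positivity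
    simp only [hfdef]
    field_simp
  have hx' : (3:ℝ)^ℓ * ((p:ℝ)/q) = (A:ℝ) + S := by
    rw [hx, hsplit, mul_add, hhead, htail, ← mul_assoc,
      mul_inv_cancel₀ (by positivity : (3:ℝ)^ℓ ≠ 0), one_mul]
  have hq0 : (q:ℝ) ≠ 0 := Nat.cast_ne_zero.mpr hq.ne'
  have h3ℓR : (3:ℝ)^ℓ = (q:ℝ)*(M:ℝ) + 1 := by
    have : (3:ℕ)^ℓ = q * M + 1 := by omega
    exact_mod_cast this
  have hkey : (p:ℝ)*(M:ℝ) = (A:ℝ) + S - (p:ℝ)/q := by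
    rw [h3ℓR] at hx'
    field_simp at hx' ⊢
    linarith [hx']
  -- bounds
  have hx0 : (0:ℝ) ≤ (p:ℝ)/q := by positivity
  have hx1 : (p:ℝ)/q ≤ 1 := by
    rw [div_le_one (by positivity)]
    exact_mod_cast hpq
  have hS0 : (0:ℝ) ≤ S := tsum_nonneg (fun i => by positivity)
  have hS1 : S ≤ 1 := tsum_digits_le_one hb2
  -- p*M = A
  have hPA : p * M = A := by
    rcases Nat.lt_trichotomy (p*M) A with h | h | h
    · exfalso
      have hle : (p:ℝ)*(M:ℝ) + 1 ≤ (A:ℝ) := by exact_mod_cast Nat.succ_le_of_lt h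
      have hSz : S = 0 := by linarith
      have hxo : (p:ℝ)/q = 1 := by linarith
      have e0 : a (0 + ℓ) = 0 := digit_eq_zero hb2 (hSdef ▸ hSz) 0
      have e2 : a ℓ = 2 := digit_eq_two ha2 (by rw [show (∑' i : ℕ, (a i : ℝ)/3^(i+1)) = tsum f from rfl, ← hx]; exact hxo) ℓ
      rw [zero_add] at e0; omega
    · exact h
    · exfalso
      have hle : (A:ℝ) + 1 ≤ (p:ℝ)*(M:ℝ) := by exact_mod_cast Nat.succ_le_of_lt h
      have hSz : S = 1 := by linarith
      have hxo : (p:ℝ)/q = 0 := by linarith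
      have e2 : a (0 + ℓ) = 2 := digit_eq_two hb2 (hSdef ▸ hSz) 0
      have e0 : a ℓ = 0 := digit_eq_zero ha2 (by rw [show (∑' i : ℕ, (a i : ℝ)/3^(i+1)) = tsum f from rfl, ← hx]; exact hxo) ℓ
      rw [zero_add] at e2; omega
  -- parity
  have hAeven : 2 ∣ A := by
    apply Finset.dvd_sum
    intro i _
    rcases ha i with h | h <;> simp [h]
  have hMeven : 2 ∣ M := by
    by_contra hO
    have hqM2 : 2 ∣ q * M := by
      rw [← hM]
      obtain ⟨k, hk⟩ := (Odd.pow (⟨1, by norm_num⟩ : Odd 3) : Odd (3^ℓ))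
      exact ⟨k, by omega⟩
    have hq2 : 2 ∣ q := (Nat.prime_two.dvd_mul.mp hqM2).resolve_right hO
    have hp2 : 2 ∣ p * M := hPA ▸ hAeven
    have hp : 2 ∣ p := (Nat.prime_two.dvd_mul.mp hp2).resolve_right hO
    have h1 : (2:ℕ) ∣ 1 := hcop ▸ Nat.dvd_gcd hp hq2
    omega
  obtain ⟨k, hk⟩ := hMeven
  refine ⟨k, ?_⟩
  have : 3^ℓ - 1 = 2*(q*k) := by rw [hM, hk]; ring
  omega
end

section
/- The ratio (m(ℓ,2)/m̄(ℓ,3)) / (2/3)^ℓ tends to 2 as ℓ → ∞, where m(ℓ,2) = Σ_{d|ℓ} μ(ℓ/d) 2^d is the number of primitive binary words of length ℓ, and m̄(ℓ,3) is the number of primitive words of length ℓ over {0,1,2} representing an even integer in base 3. -/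
/-- A word of length `ℓ` is primitive if it is not a concatenation of copies of
a shorter word. -/
def IsPrimitiveWord {ℓ a : ℕ} (w : Fin ℓ → Fin a) : Prop :=
  ¬ ∃ k, 0 < k ∧ k ∣ ℓ ∧ k < ℓ ∧
    ∀ i j : Fin ℓ, (i : ℕ) % k = (j : ℕ) % k → w i = w j

/-- `m(ℓ,2) = Σ_{d|ℓ} μ(ℓ/d) 2^d`, the number of primitive binary words of
length `ℓ`. -/
def mPrim (ℓ : ℕ) : ℤ :=
  ∑ d ∈ ℓ.divisors, ArithmeticFunction.moebius (ℓ / d) * 2 ^ d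

/-- `m̄(ℓ,3)`: the number of primitive words of length `ℓ` over `{0,1,2}`
representing an even integer in base 3. -/
noncomputable def mBar (ℓ : ℕ) : ℕ :=
  Set.ncard {w : Fin ℓ → Fin 3 | IsPrimitiveWord w ∧
    Even (∑ j : Fin ℓ, (w j : ℕ) * 3 ^ (ℓ - 1 - (j : ℕ)))}

open Finset Filter Real
attribute [local instance] Classical.propDecidable


lemma even_weighted_iff (ℓ : ℕ) (w : Fin ℓ → Fin 3) :
    Even (∑ j : Fin ℓ, (w j : ℕ) * 3 ^ (ℓ - 1 - (j:ℕ))) ↔ Even (∑ j : Fin ℓ, (w j : ℕ)) := by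
  simp [Nat.even_iff, Finset.sum_nat_mod, Nat.mul_mod, Nat.pow_mod]

lemma mySignSum (ℓ : ℕ) :
    (∑ w : Fin ℓ → Fin 3, (-1 : ℤ) ^ (∑ j : Fin ℓ, (w j : ℕ))) = 1 := by
  have h : ∀ w : Fin ℓ → Fin 3, (-1 : ℤ) ^ (∑ j : Fin ℓ, (w j : ℕ))
      = ∏ j : Fin ℓ, (-1 : ℤ) ^ (w j : ℕ) := by
    intro w; rw [Finset.prod_pow_eq_pow_sum]
  simp_rw [h]
  have := (Finset.prod_univ_sum (fun _ : Fin ℓ => (Finset.univ : Finset (Fin 3)))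
    (fun _ a => (-1:ℤ)^(a:ℕ))).symm
  rw [Fintype.piFinset_univ] at this
  rw [this]
  have h3 : (∑ a : Fin 3, (-1:ℤ)^(a:ℕ)) = 1 := by decide
  rw [h3, Finset.prod_const_one]

lemma even_card (ℓ : ℕ) :
    2 * ((Finset.univ.filter (fun w : Fin ℓ → Fin 3 =>
      Even (∑ j : Fin ℓ, (w j : ℕ)))).card : ℤ) = 3 ^ ℓ + 1 := by
  set p : (Fin ℓ → Fin 3) → Prop := fun w => Even (∑ j : Fin ℓ, (w j : ℕ)) with hp
  have h2 : (∑ w : Fin ℓ → Fin 3, ((1 : ℤ) + (-1) ^ (∑ j : Fin ℓ, (w j : ℕ))))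
      = 3 ^ ℓ + 1 := by
    rw [Finset.sum_add_distrib, mySignSum ℓ]
    simp [Fintype.card_fun]
  have e1 : (∑ w ∈ Finset.univ.filter p, ((1:ℤ) + (-1) ^ (∑ j : Fin ℓ, (w j : ℕ))))
      = 2 * ((Finset.univ.filter p).card : ℤ) := by
    rw [Finset.sum_congr rfl (fun w hw => ?_), Finset.sum_const, nsmul_eq_mul, mul_comm]
    simp only [mem_filter, hp] at hw
    rw [hw.2.neg_one_pow]; norm_num
  have e2 : (∑ w ∈ Finset.univ.filter (fun w => ¬ p w),
      ((1:ℤ) + (-1) ^ (∑ j : Fin ℓ, (w j : ℕ)))) = 0 := by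
    rw [Finset.sum_congr rfl (fun w hw => ?_), Finset.sum_const, smul_zero]
    simp only [mem_filter, hp, Nat.not_even_iff_odd] at hw
    rw [hw.2.neg_one_pow]; norm_num
  rw [← e1, ← h2, ← Finset.sum_filter_add_sum_filter_not Finset.univ p, e2, add_zero]


lemma periodic_card_le (ℓ k : ℕ) (hk : 0 < k) (hkl : k ≤ ℓ) :
    (Finset.univ.filter (fun w : Fin ℓ → Fin 3 =>
      ∀ i j : Fin ℓ, (i : ℕ) % k = (j : ℕ) % k → w i = w j)).card ≤ 3 ^ k := by
  have : (3:ℕ) ^ k = (Finset.univ : Finset (Fin k → Fin 3)).card := by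
    simp [Fintype.card_fun]
  rw [this]
  apply Finset.card_le_card_of_injOn
    (fun w => fun i : Fin k => w ⟨(i : ℕ), lt_of_lt_of_le i.isLt hkl⟩)
  · intro w _; exact Finset.mem_univ _
  · intro w hw w' hw' h
    simp only [Finset.mem_coe, Finset.mem_filter] at hw hw'
    funext i
    have hmk : (i : ℕ) % k < k := Nat.mod_lt _ hk
    have h1 : w i = w ⟨(i:ℕ) % k, lt_of_lt_of_le hmk hkl⟩ :=
      hw.2 _ _ (by simp [Nat.mod_mod_of_dvd])
    have h2 : w' i = w' ⟨(i:ℕ) % k, lt_of_lt_of_le hmk hkl⟩ :=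
      hw'.2 _ _ (by simp [Nat.mod_mod_of_dvd])
    rw [h1, h2]
    exact congrFun h ⟨(i:ℕ) % k, hmk⟩

lemma nonprim_card_le (ℓ : ℕ) :
    (Finset.univ.filter (fun w : Fin ℓ → Fin 3 => ¬ IsPrimitiveWord w)).card
      ≤ ℓ * 3 ^ (ℓ / 2) := by
  classical
  have hsub : (Finset.univ.filter (fun w : Fin ℓ → Fin 3 => ¬ IsPrimitiveWord w))
      ⊆ (ℓ.divisors.erase ℓ).biUnion (fun k => Finset.univ.filter
        (fun w : Fin ℓ → Fin 3 => ∀ i j : Fin ℓ, (i : ℕ) % k = (j : ℕ) % k → w i = w j)) := by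
    intro w hw
    simp only [Finset.mem_filter, IsPrimitiveWord, not_not] at hw
    obtain ⟨k, hk0, hkd, hkl, hper⟩ := hw.2
    refine Finset.mem_biUnion.2 ⟨k, ?_, ?_⟩
    · exact Finset.mem_erase.2 ⟨Nat.ne_of_lt hkl, Nat.mem_divisors.2 ⟨hkd, by omega⟩⟩
    · exact Finset.mem_filter.2 ⟨Finset.mem_univ _, hper⟩
  calc (Finset.univ.filter (fun w : Fin ℓ → Fin 3 => ¬ IsPrimitiveWord w)).card
      ≤ _ := Finset.card_le_card hsub
    _ ≤ ∑ k ∈ ℓ.divisors.erase ℓ, (Finset.univ.filter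
        (fun w : Fin ℓ → Fin 3 => ∀ i j : Fin ℓ, (i : ℕ) % k = (j : ℕ) % k → w i = w j)).card :=
      Finset.card_biUnion_le
    _ ≤ ∑ k ∈ ℓ.divisors.erase ℓ, 3 ^ (ℓ / 2) := by
      refine Finset.sum_le_sum fun k hk => ?_
      obtain ⟨hne, hmem⟩ := Finset.mem_erase.1 hk
      obtain ⟨hkd, hl0⟩ := Nat.mem_divisors.1 hmem
      have hk0 : 0 < k := Nat.pos_of_mem_divisors hmem
      have hkl : k ≤ ℓ := Nat.le_of_dvd (Nat.pos_of_ne_zero hl0) hkd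
      have hk2 : k ≤ ℓ / 2 := by
        rcases hkd with ⟨c, rfl⟩
        have hc : 2 ≤ c := by
          rcases Nat.lt_or_ge c 2 with h | h
          · interval_cases c <;> omega
          · exact h
        calc k ≤ k * c / 2 := Nat.le_div_iff_mul_le (by norm_num) |>.2 (by nlinarith)
          _ = k * c / 2 := rfl
      calc _ ≤ 3 ^ k := periodic_card_le ℓ k hk0 hkl
        _ ≤ 3 ^ (ℓ / 2) := Nat.pow_le_pow_right (by norm_num) hk2
    _ ≤ ∑ k ∈ ℓ.divisors.erase ℓ, 3 ^ (ℓ / 2) := le_refl _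
    _ ≤ ℓ * 3 ^ (ℓ / 2) := by
      rw [Finset.sum_const, smul_eq_mul]
      apply Nat.mul_le_mul_right
      calc (ℓ.divisors.erase ℓ).card ≤ (Finset.range ℓ).card := by
            apply Finset.card_le_card
            intro d hd
            obtain ⟨hne, hmem⟩ := Finset.mem_erase.1 hd
            have := Nat.divisor_le hmem
            exact Finset.mem_range.2 (lt_of_le_of_ne this hne)
        _ = ℓ := Finset.card_range ℓ


lemma mBar_eq (ℓ : ℕ) : mBar ℓ = (Finset.univ.filter (fun w : Fin ℓ → Fin 3 =>
    IsPrimitiveWord w ∧ Even (∑ j : Fin ℓ, (w j : ℕ) * 3 ^ (ℓ - 1 - (j : ℕ))))).card := by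
  rw [mBar, ← Set.ncard_coe_finset]
  congr 1
  ext w
  simp

lemma weighted_card (ℓ : ℕ) :
    2 * ((Finset.univ.filter (fun w : Fin ℓ → Fin 3 =>
      Even (∑ j : Fin ℓ, (w j : ℕ) * 3 ^ (ℓ - 1 - (j:ℕ))))).card : ℤ) = 3 ^ ℓ + 1 := by
  rw [← even_card ℓ]
  have : (Finset.univ.filter (fun w : Fin ℓ → Fin 3 =>
      Even (∑ j : Fin ℓ, (w j : ℕ) * 3 ^ (ℓ - 1 - (j:ℕ))))) =
      (Finset.univ.filter (fun w : Fin ℓ → Fin 3 => Even (∑ j : Fin ℓ, (w j : ℕ)))) :=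
    Finset.filter_congr fun w _ => by simp [even_weighted_iff ℓ w]
  rw [this]

lemma mBar_le (ℓ : ℕ) : 2 * (mBar ℓ : ℤ) ≤ 3 ^ ℓ + 1 := by
  rw [← weighted_card ℓ, mBar_eq]
  have : (Finset.univ.filter (fun w : Fin ℓ → Fin 3 =>
      IsPrimitiveWord w ∧ Even (∑ j : Fin ℓ, (w j : ℕ) * 3 ^ (ℓ - 1 - (j : ℕ))))) ⊆
      (Finset.univ.filter (fun w : Fin ℓ → Fin 3 =>
      Even (∑ j : Fin ℓ, (w j : ℕ) * 3 ^ (ℓ - 1 - (j : ℕ))))) := by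
    intro w hw
    simp only [Finset.mem_filter] at hw ⊢
    exact ⟨hw.1, hw.2.2⟩
  have h := Finset.card_le_card this
  have : ((Finset.univ.filter (fun w : Fin ℓ → Fin 3 =>
      IsPrimitiveWord w ∧ Even (∑ j : Fin ℓ, (w j : ℕ) * 3 ^ (ℓ - 1 - (j : ℕ))))).card : ℤ)
      ≤ ((Finset.univ.filter (fun w : Fin ℓ → Fin 3 =>
      Even (∑ j : Fin ℓ, (w j : ℕ) * 3 ^ (ℓ - 1 - (j : ℕ))))).card : ℤ) := Int.ofNat_le.2 h
  linarith

lemma le_mBar (ℓ : ℕ) : 3 ^ ℓ + 1 ≤ 2 * (mBar ℓ : ℤ) + 2 * (ℓ * 3 ^ (ℓ / 2) : ℕ) := by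
  rw [← weighted_card ℓ, mBar_eq]
  have hsub : (Finset.univ.filter (fun w : Fin ℓ → Fin 3 =>
      Even (∑ j : Fin ℓ, (w j : ℕ) * 3 ^ (ℓ - 1 - (j : ℕ))))) ⊆
      (Finset.univ.filter (fun w : Fin ℓ → Fin 3 =>
        IsPrimitiveWord w ∧ Even (∑ j : Fin ℓ, (w j : ℕ) * 3 ^ (ℓ - 1 - (j : ℕ))))) ∪
      (Finset.univ.filter (fun w : Fin ℓ → Fin 3 => ¬ IsPrimitiveWord w)) := by
    intro w hw
    simp only [Finset.mem_filter, Finset.mem_union] at hw ⊢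
    by_cases h : IsPrimitiveWord w
    · exact Or.inl ⟨hw.1, h, hw.2⟩
    · exact Or.inr ⟨hw.1, h⟩
  have h1 := (Finset.card_le_card hsub).trans (Finset.card_union_le _ _)
  have h2 := nonprim_card_le ℓ
  have h1' : ((Finset.univ.filter (fun w : Fin ℓ → Fin 3 =>
      Even (∑ j : Fin ℓ, (w j : ℕ) * 3 ^ (ℓ - 1 - (j : ℕ))))).card : ℤ)
      ≤ ((Finset.univ.filter (fun w : Fin ℓ → Fin 3 =>
        IsPrimitiveWord w ∧ Even (∑ j : Fin ℓ, (w j : ℕ) * 3 ^ (ℓ - 1 - (j : ℕ))))).card : ℤ)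
        + ((Finset.univ.filter (fun w : Fin ℓ → Fin 3 => ¬ IsPrimitiveWord w)).card : ℤ) := by
    exact_mod_cast h1
  have h2' : ((Finset.univ.filter (fun w : Fin ℓ → Fin 3 => ¬ IsPrimitiveWord w)).card : ℤ)
      ≤ ((ℓ * 3 ^ (ℓ / 2) : ℕ) : ℤ) := Int.ofNat_le.2 h2
  push_cast at h1' h2' ⊢
  linarith

lemma mPrim_bound (ℓ : ℕ) (hℓ : 1 ≤ ℓ) : |mPrim ℓ - 2 ^ ℓ| ≤ (ℓ * 2 ^ (ℓ / 2) : ℕ) := by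
  have hmem : ℓ ∈ ℓ.divisors := Nat.mem_divisors_self ℓ (by omega)
  have hsplit : mPrim ℓ = (ArithmeticFunction.moebius (ℓ / ℓ) * 2 ^ ℓ : ℤ) +
      ∑ d ∈ ℓ.divisors.erase ℓ, (ArithmeticFunction.moebius (ℓ / d) * 2 ^ d : ℤ) := by
    rw [mPrim]
    exact (Finset.add_sum_erase _ (fun d => (ArithmeticFunction.moebius (ℓ / d) * 2 ^ d : ℤ)) hmem).symm
  rw [Nat.div_self (by omega : 0 < ℓ)] at hsplit
  simp only [ArithmeticFunction.moebius_apply_one, one_mul] at hsplit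
  rw [hsplit, add_sub_cancel_left]
  calc |∑ d ∈ ℓ.divisors.erase ℓ, (ArithmeticFunction.moebius (ℓ / d) * 2 ^ d : ℤ)|
      ≤ ∑ d ∈ ℓ.divisors.erase ℓ, |(ArithmeticFunction.moebius (ℓ / d) * 2 ^ d : ℤ)| :=
        Finset.abs_sum_le_sum_abs _ _
    _ ≤ ∑ d ∈ ℓ.divisors.erase ℓ, (2:ℤ) ^ (ℓ / 2) := by
        refine Finset.sum_le_sum fun d hd => ?_
        obtain ⟨hne, hmem'⟩ := Finset.mem_erase.1 hd
        obtain ⟨hdd, hl0⟩ := Nat.mem_divisors.1 hmem'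
        have hd2 : d ≤ ℓ / 2 := by
          have hd0 : 0 < d := Nat.pos_of_mem_divisors hmem'
          rcases hdd with ⟨c, rfl⟩
          have hc : 2 ≤ c := by
            rcases Nat.lt_or_ge c 2 with h | h
            · interval_cases c <;> omega
            · exact h
          exact Nat.le_div_iff_mul_le (by norm_num) |>.2 (by nlinarith)
        rw [abs_mul, abs_pow]
        calc |(ArithmeticFunction.moebius (ℓ / d) : ℤ)| * |(2:ℤ)| ^ d
            ≤ 1 * |(2:ℤ)| ^ d := by
              apply mul_le_mul_of_nonneg_right _ (by positivity)
              exact_mod_cast ArithmeticFunction.abs_moebius_le_one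
          _ = (2:ℤ) ^ d := by norm_num
          _ ≤ (2:ℤ) ^ (ℓ / 2) := pow_le_pow_right₀ (by norm_num) hd2
    _ ≤ (ℓ.divisors.erase ℓ).card * (2:ℤ) ^ (ℓ / 2) := by
        rw [Finset.sum_const, nsmul_eq_mul]
    _ ≤ (ℓ * 2 ^ (ℓ / 2) : ℕ) := by
        push_cast
        apply mul_le_mul_of_nonneg_right _ (by positivity)
        have : (ℓ.divisors.erase ℓ).card ≤ ℓ := by
          calc (ℓ.divisors.erase ℓ).card ≤ (Finset.range ℓ).card := by
                apply Finset.card_le_card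
                intro d hd
                obtain ⟨hne, hmem'⟩ := Finset.mem_erase.1 hd
                exact Finset.mem_range.2 (lt_of_le_of_ne (Nat.divisor_le hmem') hne)
            _ = ℓ := Finset.card_range ℓ
        exact_mod_cast this


lemma nat_mul_geom_tendsto {r : ℝ} (h0 : 0 ≤ r) (h1 : r < 1) :
    Tendsto (fun n : ℕ => (n : ℝ) * r ^ n) atTop (nhds 0) := by
  have hs : Summable (fun n : ℕ => (n : ℝ) ^ 1 * r ^ n) :=
    summable_pow_mul_geometric_of_norm_lt_one 1 (by rwa [Real.norm_eq_abs, abs_of_nonneg h0])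
  simpa using hs.tendsto_atTop_zero

lemma pow_half_le (b : ℝ) (hb : 1 ≤ b) (ℓ : ℕ) :
    (b : ℝ) ^ (ℓ / 2) ≤ (Real.sqrt b) ^ ℓ := by
  have h : (b : ℝ) ^ (ℓ / 2) = (Real.sqrt b) ^ (2 * (ℓ / 2)) := by
    rw [pow_mul, Real.sq_sqrt (by linarith)]
  rw [h]
  have h1 : (1:ℝ) ≤ Real.sqrt b := by
    rw [show (1:ℝ) = Real.sqrt 1 by simp]
    exact Real.sqrt_le_sqrt hb
  exact pow_le_pow_right₀ h1 (by omega)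

lemma my_hf : Tendsto (fun ℓ : ℕ => (mPrim ℓ : ℝ) / 2 ^ ℓ) atTop (nhds 1) := by
  have key : Tendsto (fun ℓ : ℕ => (mPrim ℓ : ℝ) / 2 ^ ℓ - 1) atTop (nhds 0) := by
    apply squeeze_zero_norm' (a := fun ℓ : ℕ => (ℓ : ℝ) * (Real.sqrt 2 / 2) ^ ℓ)
    · filter_upwards [eventually_ge_atTop 1] with ℓ hℓ
      have hb := mPrim_bound ℓ hℓ
      have hb' : |(mPrim ℓ : ℝ) - 2 ^ ℓ| ≤ ((ℓ * 2 ^ (ℓ / 2) : ℕ) : ℝ) := by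
        exact_mod_cast hb
      have h2 : (0:ℝ) < 2 ^ ℓ := by positivity
      rw [Real.norm_eq_abs, show (mPrim ℓ : ℝ) / 2 ^ ℓ - 1 = ((mPrim ℓ : ℝ) - 2 ^ ℓ) / 2 ^ ℓ by
        field_simp, abs_div, abs_of_pos h2, div_le_iff₀ h2]
      calc |(mPrim ℓ : ℝ) - 2 ^ ℓ| ≤ ((ℓ * 2 ^ (ℓ / 2) : ℕ) : ℝ) := hb'
        _ = (ℓ : ℝ) * 2 ^ (ℓ / 2) := by push_cast; ring
        _ ≤ (ℓ : ℝ) * (Real.sqrt 2) ^ ℓ := by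
            apply mul_le_mul_of_nonneg_left (pow_half_le 2 (by norm_num) ℓ) (by positivity)
        _ = (ℓ : ℝ) * (Real.sqrt 2 / 2) ^ ℓ * 2 ^ ℓ := by
            rw [div_pow]; field_simp
    · refine nat_mul_geom_tendsto (by positivity) ?_
      rw [div_lt_one (by norm_num)]
      nlinarith [Real.sq_sqrt (by norm_num : (0:ℝ) ≤ 2), Real.sqrt_nonneg 2]
  have := key.add_const 1
  simpa using this

lemma my_hg : Tendsto (fun ℓ : ℕ => 2 * (mBar ℓ : ℝ) / 3 ^ ℓ) atTop (nhds 1) := by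
  have key : Tendsto (fun ℓ : ℕ => 2 * (mBar ℓ : ℝ) / 3 ^ ℓ - 1) atTop (nhds 0) := by
    apply squeeze_zero_norm'
      (a := fun ℓ : ℕ => (1/3 : ℝ) ^ ℓ + 2 * ((ℓ : ℝ) * (Real.sqrt 3 / 3) ^ ℓ))
    · filter_upwards [eventually_ge_atTop 1] with ℓ hℓ
      have h1 := mBar_le ℓ
      have h2 := le_mBar ℓ
      have habs : |2 * (mBar ℓ : ℤ) - 3 ^ ℓ| ≤ 1 + 2 * (ℓ * 3 ^ (ℓ / 2) : ℕ) := by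
        rw [abs_le]; constructor <;> push_cast at h1 h2 ⊢ <;> linarith
      have habs' : |2 * (mBar ℓ : ℝ) - 3 ^ ℓ| ≤ 1 + 2 * ((ℓ : ℝ) * 3 ^ (ℓ / 2)) := by
        have : |2 * (mBar ℓ : ℝ) - 3 ^ ℓ| ≤ ((1 + 2 * (ℓ * 3 ^ (ℓ / 2) : ℕ) : ℤ) : ℝ) := by
          exact_mod_cast habs
        calc |2 * (mBar ℓ : ℝ) - 3 ^ ℓ| ≤ _ := this
          _ = 1 + 2 * ((ℓ : ℝ) * 3 ^ (ℓ / 2)) := by push_cast; ring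
      have h3 : (0:ℝ) < 3 ^ ℓ := by positivity
      rw [Real.norm_eq_abs, show 2 * (mBar ℓ : ℝ) / 3 ^ ℓ - 1
          = (2 * (mBar ℓ : ℝ) - 3 ^ ℓ) / 3 ^ ℓ by field_simp, abs_div, abs_of_pos h3,
        div_le_iff₀ h3]
      calc |2 * (mBar ℓ : ℝ) - 3 ^ ℓ| ≤ 1 + 2 * ((ℓ : ℝ) * 3 ^ (ℓ / 2)) := habs'
        _ ≤ 1 + 2 * ((ℓ : ℝ) * (Real.sqrt 3) ^ ℓ) := by
            have := pow_half_le 3 (by norm_num) ℓ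
            have hℓ0 : (0:ℝ) ≤ (ℓ:ℝ) := Nat.cast_nonneg ℓ
            nlinarith
        _ = ((1/3 : ℝ) ^ ℓ + 2 * ((ℓ : ℝ) * (Real.sqrt 3 / 3) ^ ℓ)) * 3 ^ ℓ := by
            rw [div_pow, div_pow]; field_simp; simp
    · have t1 : Tendsto (fun ℓ : ℕ => (1/3 : ℝ) ^ ℓ) atTop (nhds 0) :=
        tendsto_pow_atTop_nhds_zero_of_lt_one (by norm_num) (by norm_num)
      have t2 := nat_mul_geom_tendsto (r := Real.sqrt 3 / 3) (by positivity) ?_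
      · simpa using t1.add (t2.const_mul 2)
      · rw [div_lt_one (by norm_num)]
        nlinarith [Real.sq_sqrt (by norm_num : (0:ℝ) ≤ 3), Real.sqrt_nonneg 3]
  have := key.add_const 1
  simpa using this

/-- The ratio `(m(ℓ,2)/m̄(ℓ,3)) / (2/3)^ℓ` tends to `2` as `ℓ → ∞`. -/
theorem stmt_12 :
    Filter.Tendsto (fun ℓ : ℕ => ((mPrim ℓ : ℝ) / (mBar ℓ : ℝ)) / ((2 / 3 : ℝ) ^ ℓ))
      Filter.atTop (nhds 2) := by
  have heq : ∀ ℓ : ℕ, ((mPrim ℓ : ℝ) / (mBar ℓ : ℝ)) / ((2 / 3 : ℝ) ^ ℓ)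
      = ((mPrim ℓ : ℝ) / 2 ^ ℓ) * 2 / (2 * (mBar ℓ : ℝ) / 3 ^ ℓ) := by
    intro ℓ
    rcases eq_or_ne ((mBar ℓ : ℝ)) 0 with h | h
    · simp [h]
    · have h2 : (2:ℝ) ^ ℓ ≠ 0 := by positivity
      have h3 : (3:ℝ) ^ ℓ ≠ 0 := by positivity
      rw [div_pow]
      field_simp
  have h2 : Tendsto (fun ℓ : ℕ => ((mPrim ℓ : ℝ) / 2 ^ ℓ) * 2 / (2 * (mBar ℓ : ℝ) / 3 ^ ℓ))
      atTop (nhds (1 * 2 / 1)) := (my_hf.mul_const 2).div my_hg (by norm_num)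
  norm_num at h2
  exact Tendsto.congr (fun ℓ => (heq ℓ).symm) h2
end

section
/- The number of primitive words of length ℓ over the alphabet {0,1,...,a-1} representing an even integer in base a equals Σ_{d|ℓ, ℓ/d even} μ(ℓ/d) a^d + Σ_{d|ℓ, ℓ/d odd} μ(ℓ/d) ⌈a^d/2⌉, for odd a. -/
open Finset

/-! ### Auxiliary counting lemmas -/

lemma aux_two_mul_card_even_range (b : ℕ) :
    2 * ((Finset.range (2*b+1)).filter (fun x => Even x)).card = (2*b+1) + 1 := by
  induction b with
  | zero => decide
  | succ b ih =>
    have h1 : 2*(b+1)+1 = (2*b+1) + 1 + 1 := by ring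
    rw [h1, Finset.range_add_one, Finset.range_add_one, Finset.filter_insert, Finset.filter_insert]
    have he : Even (2*b+1+1) := ⟨b+1, by ring⟩
    have ho : ¬ Even (2*b+1) := by simp [Nat.even_iff, Nat.add_mod, Nat.mul_mod]
    rw [if_pos he, if_neg ho, Finset.card_insert_of_notMem (by simp)]
    omega

lemma aux_two_mul_card_even_fin (a : ℕ) (ha : Odd a) :
    2 * (Finset.univ.filter (fun x : Fin a => Even (x:ℕ))).card = a + 1 := by
  obtain ⟨b, hb⟩ := ha
  have key : (Finset.univ.filter (fun x : Fin a => Even (x:ℕ))).card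
      = ((Finset.range a).filter (fun x => Even x)).card := by
    refine Finset.card_bij (fun x _ => (x:ℕ)) ?_ ?_ ?_
    · intro x hx
      simp only [Finset.mem_filter, Finset.mem_range, Finset.mem_univ, true_and] at hx ⊢
      exact ⟨x.isLt, hx⟩
    · intro x _ y _ h; exact Fin.ext h
    · intro y hy
      simp only [Finset.mem_filter, Finset.mem_range, Finset.mem_univ, true_and] at hy
      exact ⟨⟨y, hy.1⟩, by simpa using hy.2, rfl⟩
  rw [key, hb]
  have := aux_two_mul_card_even_range b
  omega

lemma aux_two_mul_card_even_sum (a : ℕ) (ha : Odd a) (d : ℕ) :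
    2 * (Finset.univ.filter
        (fun u : Fin d → Fin a => Even (∑ i, (u i : ℕ)))).card = a ^ d + 1 := by
  induction d with
  | zero =>
    have : (Finset.univ.filter
        (fun u : Fin 0 → Fin a => Even (∑ i, (u i : ℕ)))) = Finset.univ := by
      apply Finset.filter_true_of_mem; intro u _; simp
    rw [this]
    simp [Fintype.card_fun]
  | succ d ih =>
    classical
    set s := Finset.univ.filter
        (fun u : Fin (d+1) → Fin a => Even (∑ i, (u i : ℕ))) with hs
    have hfib : s.card = ∑ x : Fin a,
        (s.filter (fun u => u 0 = x)).card :=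
      Finset.card_eq_sum_card_fiberwise (fun u _ => Finset.mem_univ (u 0))
    have hfibcard : ∀ x : Fin a, (s.filter (fun u => u 0 = x)).card
        = (Finset.univ.filter
            (fun v : Fin d → Fin a => Even ((x:ℕ) + ∑ i, (v i : ℕ)))).card := by
      intro x
      refine Finset.card_nbij' (fun u => Fin.tail u) (fun v => Fin.cons x v) ?_ ?_ ?_ ?_
      · intro u hu
        simp only [hs, Finset.mem_coe, Finset.mem_filter, Finset.mem_univ, true_and] at hu ⊢
        obtain ⟨h1, h2⟩ := hu
        rw [Fin.sum_univ_succ, h2] at h1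
        exact h1
      · intro v hv
        simp only [hs, Finset.mem_coe, Finset.mem_filter, Finset.mem_univ, true_and] at hv ⊢
        constructor
        · rw [Fin.sum_univ_succ]
          simpa using hv
        · simp
      · intro u hu
        simp only [hs, Finset.mem_coe, Finset.mem_filter] at hu
        rw [← hu.2]
        exact Fin.cons_self_tail u
      · intro v _
        exact Fin.tail_cons (α := fun _ => Fin a) x v
    have hsplit : s.card = ∑ x : Fin a,
        (if Even (x:ℕ)
          then (Finset.univ.filter (fun v : Fin d → Fin a => Even (∑ i, (v i : ℕ)))).card
          else (Finset.univ.filter (fun v : Fin d → Fin a => ¬ Even (∑ i, (v i : ℕ)))).card) := by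
      rw [hfib]
      refine Finset.sum_congr rfl ?_
      intro x _
      rw [hfibcard x]
      by_cases hx : Even (x:ℕ)
      · rw [if_pos hx]
        congr 1
        apply Finset.filter_congr
        intro v _
        simp [Nat.even_add, hx]
      · rw [if_neg hx]
        congr 1
        apply Finset.filter_congr
        intro v _
        simp [Nat.even_add, hx]
    set E := (Finset.univ.filter (fun v : Fin d → Fin a => Even (∑ i, (v i : ℕ)))).card with hE
    set O := (Finset.univ.filter (fun v : Fin d → Fin a => ¬ Even (∑ i, (v i : ℕ)))).card with hO
    set Ea := (Finset.univ.filter (fun x : Fin a => Even (x:ℕ))).card with hEa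
    set Oa := (Finset.univ.filter (fun x : Fin a => ¬ Even (x:ℕ))).card with hOa
    have h0 : s.card = Ea * E + Oa * O := by
      rw [hsplit, Finset.sum_ite, Finset.sum_const, Finset.sum_const, ← hEa, ← hOa,
        smul_eq_mul, smul_eq_mul]
    have h1 : 2 * Ea = a + 1 := aux_two_mul_card_even_fin a ha
    have h2 : Ea + Oa = a := by
      rw [hEa, hOa, Finset.card_filter_add_card_filter_not]
      simp
    have h4 : E + O = a ^ d := by
      rw [hE, hO, Finset.card_filter_add_card_filter_not]
      simp [Fintype.card_fun]
    zify at h0 h1 h2 ih h4 ⊢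
    linear_combination 2*h0 + (2*(E:ℤ) - (a:ℤ)^d)*h1 + 2*(O:ℤ)*h2 + ih
      + (2*(a:ℤ) - 2*(Ea:ℤ))*h4

/-! ### Periods -/

section Periods

open scoped Classical

variable {a ℓ : ℕ}

/-- `w` has period `k` (dividing `ℓ`). -/
def HasPeriod (w : Fin ℓ → Fin a) (k : ℕ) : Prop :=
  k ∣ ℓ ∧ ∀ i j : Fin ℓ, (i : ℕ) % k = (j : ℕ) % k → w i = w j

lemma hasPeriod_self (w : Fin ℓ → Fin a) : HasPeriod w ℓ := by
  refine ⟨dvd_refl ℓ, ?_⟩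
  intro i j hij
  rw [Nat.mod_eq_of_lt i.isLt, Nat.mod_eq_of_lt j.isLt] at hij
  congr 1
  exact Fin.ext hij

lemma hasPeriod_gcd (hℓ : 0 < ℓ) {w : Fin ℓ → Fin a} {k₁ k₂ : ℕ}
    (h₁ : HasPeriod w k₁) (h₂ : HasPeriod w k₂) : HasPeriod w (Nat.gcd k₁ k₂) := by
  refine ⟨dvd_trans (Nat.gcd_dvd_left k₁ k₂) h₁.1, ?_⟩
  intro i j hij
  have hmod : (i : ℕ) ≡ (j : ℕ) [MOD Nat.gcd k₁ k₂] := hij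
  obtain ⟨t, ht₁, ht₂⟩ := Nat.chineseRemainder' hmod
  have htl : t % ℓ < ℓ := Nat.mod_lt t hℓ
  have e₁ : w i = w ⟨t % ℓ, htl⟩ := by
    apply h₁.2
    show (i : ℕ) % k₁ = (t % ℓ) % k₁
    rw [Nat.mod_mod_of_dvd t h₁.1]
    exact ht₁.symm
  have e₂ : w j = w ⟨t % ℓ, htl⟩ := by
    apply h₂.2
    show (j : ℕ) % k₂ = (t % ℓ) % k₂
    rw [Nat.mod_mod_of_dvd t h₂.1]
    exact ht₂.symm
  rw [e₁, e₂]

/-- The minimal period of a word. -/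
noncomputable def minp (w : Fin ℓ → Fin a) : ℕ :=
  sInf {k | 0 < k ∧ HasPeriod w k}

lemma minp_mem (hℓ : 0 < ℓ) (w : Fin ℓ → Fin a) :
    0 < minp w ∧ HasPeriod w (minp w) :=
  Nat.sInf_mem (⟨ℓ, hℓ, hasPeriod_self w⟩ : Set.Nonempty {k | 0 < k ∧ HasPeriod w k})

lemma hasPeriod_iff (hℓ : 0 < ℓ) (w : Fin ℓ → Fin a) (k : ℕ) :
    HasPeriod w k ↔ minp w ∣ k ∧ k ∣ ℓ := by
  constructor
  · intro h
    refine ⟨?_, h.1⟩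
    have hg : HasPeriod w (Nat.gcd (minp w) k) := hasPeriod_gcd hℓ (minp_mem hℓ w).2 h
    have hg0 : 0 < Nat.gcd (minp w) k := Nat.gcd_pos_of_pos_left k (minp_mem hℓ w).1
    have hle : minp w ≤ Nat.gcd (minp w) k := Nat.sInf_le ⟨hg0, hg⟩
    have hle' : Nat.gcd (minp w) k ≤ minp w :=
      Nat.le_of_dvd (minp_mem hℓ w).1 (Nat.gcd_dvd_left _ _)
    have heq : Nat.gcd (minp w) k = minp w := le_antisymm hle' hle
    rw [← heq]
    exact Nat.gcd_dvd_right _ _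
  · rintro ⟨hdk, hkl⟩
    refine ⟨hkl, ?_⟩
    intro i j hij
    apply (minp_mem hℓ w).2.2
    calc (i:ℕ) % minp w = (i:ℕ) % k % minp w := (Nat.mod_mod_of_dvd _ hdk).symm
    _ = (j:ℕ) % k % minp w := by rw [hij]
    _ = (j:ℕ) % minp w := Nat.mod_mod_of_dvd _ hdk

lemma primitive_iff (hℓ : 0 < ℓ) (w : Fin ℓ → Fin a) :
    IsPrimitiveWord w ↔ minp w = ℓ := by
  constructor
  · intro h
    by_contra hne
    have hdvd : minp w ∣ ℓ := (minp_mem hℓ w).2.1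
    have hlt : minp w < ℓ := lt_of_le_of_ne (Nat.le_of_dvd hℓ hdvd) hne
    exact h ⟨minp w, (minp_mem hℓ w).1, hdvd, hlt, (minp_mem hℓ w).2.2⟩
  · intro h
    rintro ⟨k, hk0, hkl, hklt, hper⟩
    have hp : HasPeriod w k := ⟨hkl, hper⟩
    have hdvd : minp w ∣ k := ((hasPeriod_iff hℓ w k).mp hp).1
    have : minp w ≤ k := Nat.le_of_dvd hk0 hdvd
    omega

/-! ### Parity of values -/

lemma even_value_iff (ha : Odd a) (w : Fin ℓ → Fin a) :
    Even (∑ j : Fin ℓ, (w j : ℕ) * a ^ (ℓ - 1 - (j:ℕ)))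
      ↔ Even (∑ j : Fin ℓ, (w j : ℕ)) := by
  have ha2 : (a : ZMod 2) = 1 := by
    obtain ⟨c, hc⟩ := ha
    subst hc
    push_cast
    rw [(by decide : (2 : ZMod 2) = 0)]
    ring
  have h2 : ∀ n : ℕ, (Even n ↔ ((n : ZMod 2) = 0)) := by
    intro n
    rw [ZMod.natCast_eq_zero_iff]
    exact even_iff_two_dvd
  rw [h2, h2]
  push_cast
  simp [ha2]

/-! ### Counting periodic words -/

lemma sum_extension {d : ℕ} (hd : d ∣ ℓ) (hd0 : 0 < d) (u : Fin d → Fin a) :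
    ∑ j : Fin ℓ, (u ⟨(j:ℕ) % d, Nat.mod_lt _ hd0⟩ : ℕ) = (ℓ / d) * ∑ i : Fin d, (u i : ℕ) := by
  set F : ℕ → ℕ := fun j => (u ⟨j % d, Nat.mod_lt j hd0⟩ : ℕ) with hF
  have hFd : ∀ i : Fin d, F (i : ℕ) = (u i : ℕ) := by
    intro i
    show (u _ : ℕ) = (u i : ℕ)
    congr 1
    exact Fin.ext (by simp [Nat.mod_eq_of_lt i.isLt])
  have key : ∀ m : ℕ, ∑ j ∈ Finset.range (m * d), F j = m * ∑ i : Fin d, (u i : ℕ) := by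
    intro m
    induction m with
    | zero => simp
    | succ m ih =>
      have hmd : (m + 1) * d = m * d + d := by ring
      rw [hmd, Finset.sum_range_add, ih]
      have hshift : ∀ x ∈ Finset.range d, F (m * d + x) = F x := by
        intro x _
        have hx : (m * d + x) % d = x % d := by
          rw [add_comm]
          exact Nat.add_mul_mod_self_right x m d
        simp only [hF, hx]
      rw [Finset.sum_congr rfl hshift]
      have hsum : ∑ x ∈ Finset.range d, F x = ∑ i : Fin d, (u i : ℕ) := by
        rw [← Fin.sum_univ_eq_sum_range F d]
        exact Finset.sum_congr rfl (fun i _ => hFd i)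
      rw [hsum]
      ring
  calc ∑ j : Fin ℓ, (u ⟨(j:ℕ) % d, Nat.mod_lt _ hd0⟩ : ℕ) = ∑ j ∈ Finset.range ℓ, F j :=
        Fin.sum_univ_eq_sum_range F ℓ
    _ = ∑ j ∈ Finset.range (ℓ / d * d), F j := by rw [Nat.div_mul_cancel hd]
    _ = (ℓ / d) * ∑ i : Fin d, (u i : ℕ) := key (ℓ / d)

lemma card_period_even_aux (a ℓ : ℕ) (hℓ : 0 < ℓ) {d : ℕ} (hd : d ∣ ℓ) :
    (Finset.univ.filter
      (fun w : Fin ℓ → Fin a => HasPeriod w d ∧ Even (∑ j, (w j : ℕ)))).card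
    = (Finset.univ.filter
      (fun u : Fin d → Fin a => Even ((ℓ/d) * ∑ i, (u i : ℕ)))).card := by
  have hd0 : 0 < d := Nat.pos_of_dvd_of_pos hd hℓ
  have hdl : d ≤ ℓ := Nat.le_of_dvd hℓ hd
  refine Finset.card_nbij'
    (fun w => fun i : Fin d => w ⟨(i:ℕ), lt_of_lt_of_le i.isLt hdl⟩)
    (fun u => fun j : Fin ℓ => u ⟨(j:ℕ) % d, Nat.mod_lt _ hd0⟩) ?_ ?_ ?_ ?_
  · intro w hw
    simp only [Finset.mem_coe, Finset.mem_filter, Finset.mem_univ, true_and] at hw ⊢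
    obtain ⟨⟨hdvd, hper⟩, heven⟩ := hw
    set u : Fin d → Fin a := fun i : Fin d => w ⟨(i:ℕ), lt_of_lt_of_le i.isLt hdl⟩ with hu
    have hext : ∀ j : Fin ℓ, w j = u ⟨(j:ℕ) % d, Nat.mod_lt _ hd0⟩ := by
      intro j
      apply hper
      show (j:ℕ) % d = (j:ℕ) % d % d
      exact (Nat.mod_mod_of_dvd _ dvd_rfl).symm
    have hsum : ∑ j : Fin ℓ, (w j : ℕ) = (ℓ/d) * ∑ i : Fin d, (u i : ℕ) := by
      rw [Finset.sum_congr rfl (fun j _ => congrArg _ (hext j))]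
      exact sum_extension hd hd0 u
    rw [← hsum]
    exact heven
  · intro u hu
    simp only [Finset.mem_coe, Finset.mem_filter, Finset.mem_univ, true_and] at hu ⊢
    constructor
    · refine ⟨hd, ?_⟩
      intro i j hij
      exact congrArg u (Fin.mk_eq_mk.mpr hij ▸ rfl)
    · rw [sum_extension hd hd0 u]
      exact hu
  · intro w hw
    simp only [Finset.mem_coe, Finset.mem_filter, Finset.mem_univ, true_and] at hw
    funext j
    exact hw.1.2 ⟨(j:ℕ) % d, lt_of_lt_of_le (Nat.mod_lt _ hd0) hdl⟩ j
      (Nat.mod_mod_of_dvd _ dvd_rfl)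
  · intro u _
    funext i
    exact congrArg u (Fin.ext (Nat.mod_eq_of_lt i.isLt))

lemma card_period_even_of_even (a ℓ : ℕ) (hℓ : 0 < ℓ) {d : ℕ} (hd : d ∣ ℓ)
    (hm : Even (ℓ / d)) :
    (Finset.univ.filter
      (fun w : Fin ℓ → Fin a => HasPeriod w d ∧ Even (∑ j, (w j : ℕ)))).card = a ^ d := by
  rw [card_period_even_aux a ℓ hℓ hd,
    Finset.filter_true_of_mem (fun u _ => Nat.even_mul.mpr (Or.inl hm))]
  simp [Fintype.card_fun]

lemma card_period_even_of_odd (a ℓ : ℕ) (ha : Odd a) (hℓ : 0 < ℓ) {d : ℕ} (hd : d ∣ ℓ)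
    (hm : Odd (ℓ / d)) :
    2 * (Finset.univ.filter
      (fun w : Fin ℓ → Fin a => HasPeriod w d ∧ Even (∑ j, (w j : ℕ)))).card
      = a ^ d + 1 := by
  rw [card_period_even_aux a ℓ hℓ hd]
  have hfilt : (Finset.univ.filter
      (fun u : Fin d → Fin a => Even ((ℓ/d) * ∑ i, (u i : ℕ))))
      = (Finset.univ.filter (fun u : Fin d → Fin a => Even (∑ i, (u i : ℕ)))) := by
    apply Finset.filter_congr
    intro u _
    rw [Nat.even_mul]
    simp [Nat.not_even_iff_odd.mpr hm]
  rw [hfilt]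
  exact aux_two_mul_card_even_sum a ha d

/-! ### Möbius inversion -/

noncomputable def gEven (a ℓ n : ℕ) : ℕ :=
  (Finset.univ.filter
    (fun w : Fin ℓ → Fin a => HasPeriod w n ∧ Even (∑ j, (w j : ℕ)))).card

noncomputable def fEven (a ℓ e : ℕ) : ℕ :=
  (Finset.univ.filter
    (fun w : Fin ℓ → Fin a => minp w = e ∧ Even (∑ j, (w j : ℕ)))).card

lemma sum_fEven (a ℓ : ℕ) (hℓ : 0 < ℓ) {n : ℕ} (hn : n ∣ ℓ) :
    ∑ e ∈ n.divisors, fEven a ℓ e = gEven a ℓ n := by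
  have hn0 : 0 < n := Nat.pos_of_dvd_of_pos hn hℓ
  rw [gEven, Finset.card_eq_sum_card_fiberwise
    (f := fun w : Fin ℓ → Fin a => minp w) (t := n.divisors) ?_]
  · refine Finset.sum_congr rfl ?_
    intro e he
    rw [fEven]
    congr 1
    ext w
    simp only [Finset.mem_filter, Finset.mem_univ, true_and]
    constructor
    · rintro ⟨hme, hev⟩
      exact ⟨⟨(hasPeriod_iff hℓ w n).mpr ⟨hme ▸ (Nat.mem_divisors.mp he).1, hn⟩, hev⟩, hme⟩
    · rintro ⟨⟨_, hev⟩, hme⟩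
      exact ⟨hme, hev⟩
  · intro w hw
    simp only [Finset.mem_coe, Finset.mem_filter, Finset.mem_univ, true_and] at hw ⊢
    rw [Nat.mem_divisors]
    exact ⟨((hasPeriod_iff hℓ w n).mp hw.1).1, hn0.ne'⟩

lemma fEven_eq_moebius (a ℓ : ℕ) (hℓ : 0 < ℓ) :
    (fEven a ℓ ℓ : ℤ) = ∑ d ∈ ℓ.divisors,
      (ArithmeticFunction.moebius (ℓ / d) : ℤ) * (gEven a ℓ d : ℤ) := by
  have key := (ArithmeticFunction.sum_eq_iff_sum_smul_moebius_eq_on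
    (f := fun e => (fEven a ℓ e : ℤ)) (g := fun n => (gEven a ℓ n : ℤ))
    {n : ℕ | n ∣ ℓ} (fun m n hmn hn => hmn.trans hn)).mp ?_ ℓ hℓ dvd_rfl
  · rw [← key, Nat.sum_divisorsAntidiagonal' (f := fun x y =>
      (ArithmeticFunction.moebius x : ℤ) • (gEven a ℓ y : ℤ))]
    refine Finset.sum_congr rfl ?_
    intro d _
    simp [zsmul_eq_mul]
  · intro n _ hn
    rw [← sum_fEven a ℓ hℓ hn]
    push_cast
    rfl

end Periods

/-- For odd `a`, the number of primitive words of length `ℓ` over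
`{0,…,a-1}` representing an even integer in base `a` equals
`Σ_{d|ℓ, ℓ/d even} μ(ℓ/d) a^d + Σ_{d|ℓ, ℓ/d odd} μ(ℓ/d) ⌈a^d/2⌉`. -/
theorem stmt_13 (a ℓ : ℕ) (ha : Odd a) (hℓ : 0 < ℓ) :
    (Set.ncard {w : Fin ℓ → Fin a | IsPrimitiveWord w ∧
        Even (∑ j : Fin ℓ, (w j : ℕ) * a ^ (ℓ - 1 - (j : ℕ)))} : ℤ) =
      ∑ d ∈ ℓ.divisors.filter (fun d => Even (ℓ / d)),
        ArithmeticFunction.moebius (ℓ / d) * (a : ℤ) ^ d +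
      ∑ d ∈ ℓ.divisors.filter (fun d => Odd (ℓ / d)),
        ArithmeticFunction.moebius (ℓ / d) * ⌈((a : ℚ) ^ d) / 2⌉ := by
  classical
  have hset : {w : Fin ℓ → Fin a | IsPrimitiveWord w ∧
        Even (∑ j : Fin ℓ, (w j : ℕ) * a ^ (ℓ - 1 - (j : ℕ)))}
      = {w : Fin ℓ → Fin a | minp w = ℓ ∧ Even (∑ j : Fin ℓ, (w j : ℕ))} := by
    ext w
    simp only [Set.mem_setOf_eq]
    rw [even_value_iff ha w, primitive_iff hℓ w]
  have hncard : ({w : Fin ℓ → Fin a | IsPrimitiveWord w ∧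
        Even (∑ j : Fin ℓ, (w j : ℕ) * a ^ (ℓ - 1 - (j : ℕ)))}).ncard = fEven a ℓ ℓ := by
    rw [hset, Set.ncard_eq_toFinset_card', Set.toFinset_setOf, fEven]
  rw [hncard, fEven_eq_moebius a ℓ hℓ,
    ← Finset.sum_filter_add_sum_filter_not ℓ.divisors (fun d => Even (ℓ / d))]
  congr 1
  · refine Finset.sum_congr rfl ?_
    intro d hd
    simp only [Finset.mem_filter, Nat.mem_divisors] at hd
    congr 1
    have := card_period_even_of_even a ℓ hℓ hd.1.1 hd.2
    rw [gEven, this]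
    push_cast
    ring
  · have hfe : ℓ.divisors.filter (fun d => ¬ Even (ℓ / d))
        = ℓ.divisors.filter (fun d => Odd (ℓ / d)) := by
      apply Finset.filter_congr
      intro d _
      exact Nat.not_even_iff_odd
    rw [hfe]
    refine Finset.sum_congr rfl ?_
    intro d hd
    simp only [Finset.mem_filter, Nat.mem_divisors] at hd
    congr 1
    have h2 := card_period_even_of_odd a ℓ ha hℓ hd.1.1 hd.2
    have h2' : 2 * (gEven a ℓ d : ℤ) = (a:ℤ) ^ d + 1 := by
      rw [gEven]
      exact_mod_cast h2
    have h2q : 2 * ((gEven a ℓ d : ℕ) : ℚ) = (a:ℚ) ^ d + 1 := by exact_mod_cast h2'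
    symm
    rw [Int.ceil_eq_iff]
    push_cast
    constructor <;> linarith
end

section
/- Let ω ∈ {0,2}^r and let ω̄ be obtained from ω by swapping digits 0 and 2. Then the purely periodic base-3 number with repeating block ωω̄ (of period 2r) is a rational whose denominator in reduced form divides 3^r + 1, and it lies in the Cantor middle-thirds set. -/
/-- For `ω ∈ {0,2}^r` with digit-swap `ω̄`, the purely periodic base-3 number
with repeating block `ωω̄` lies in the Cantor set and its reduced denominator
divides `3^r + 1`. -/
theorem stmt_14 (r : ℕ) (hr : 0 < r) (ω : Fin r → ℕ) (hω : ∀ j, ω j = 0 ∨ ω j = 2) :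
    ((((∑ j : Fin r, ω j * 3 ^ (2 * r - 1 - (j : ℕ)) +
        ∑ j : Fin r, (2 - ω j) * 3 ^ (r - 1 - (j : ℕ)) : ℕ) : ℝ) /
          (3 ^ (2 * r) - 1)) ∈ cantorMiddleThirds) ∧
    (((∑ j : Fin r, ω j * 3 ^ (2 * r - 1 - (j : ℕ)) +
        ∑ j : Fin r, (2 - ω j) * 3 ^ (r - 1 - (j : ℕ)) : ℕ) : ℚ) /
          (3 ^ (2 * r) - 1)).den ∣ 3 ^ r + 1 := by
  have hω2 : ∀ j, ω j ≤ 2 := fun j => by rcases hω j with h | h <;> omega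
  -- the extension of `ω` to `ℕ`
  set ω' : ℕ → ℕ := fun i => if h : i < r then ω ⟨i, h⟩ else 0 with hω'
  have hω'eq : ∀ j : Fin r, ω' (j : ℕ) = ω j := fun j => by
    simp [hω', j.isLt]
  have hω'2 : ∀ i, ω' i ≤ 2 := by
    intro i; simp only [hω']; split
    · exact hω2 _
    · omega
  -- the digit sequence, periodic of period 2r
  set a : ℕ → ℕ := fun i =>
    if i % (2 * r) < r then ω' (i % (2 * r)) else 2 - ω' (i % (2 * r) - r) with ha
  have hmodlt : ∀ i : ℕ, i % (2 * r) < 2 * r := fun i => Nat.mod_lt _ (by omega)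
  have hadig : ∀ i, a i = 0 ∨ a i = 2 := by
    intro i
    simp only [ha]
    split
    · next h => rcases hω ⟨i % (2 * r), h⟩ with h2 | h2 <;> simp [hω', h, h2]
    · next h =>
      have h1 : i % (2 * r) - r < r := by have := hmodlt i; omega
      rcases hω ⟨i % (2 * r) - r, h1⟩ with h2 | h2 <;> simp [hω', h1, h2]
  have ha2 : ∀ i, a i ≤ 2 := fun i => by rcases hadig i with h | h <;> omega
  -- N as a natural number
  set N : ℕ := ∑ j : Fin r, ω j * 3 ^ (2 * r - 1 - (j : ℕ)) +
      ∑ j : Fin r, (2 - ω j) * 3 ^ (r - 1 - (j : ℕ)) with hN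
  have hNr : N = ∑ i ∈ Finset.range r, ω' i * 3 ^ (2 * r - 1 - i) +
      ∑ i ∈ Finset.range r, (2 - ω' i) * 3 ^ (r - 1 - i) := by
    rw [hN]
    congr 1 <;> rw [← Fin.sum_univ_eq_sum_range] <;>
      exact Finset.sum_congr rfl fun j _ => by rw [hω'eq]
  -- key combinatorial identity in ℕ
  have Nkey : ∑ i ∈ Finset.range (2 * r), a i * 3 ^ (2 * r - 1 - i) = N := by
    have hsplit : Finset.range r ∪ Finset.Ico r (2 * r) = Finset.range (2 * r) := by
      simp only [Finset.range_eq_Ico]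
      exact Finset.Ico_union_Ico_eq_Ico (by omega) (by omega)
    rw [← hsplit, Finset.sum_union (by
      simp only [Finset.disjoint_left, Finset.mem_range, Finset.mem_Ico]; omega), hNr]
    congr 1
    · refine Finset.sum_congr rfl fun i hi => ?_
      rw [Finset.mem_range] at hi
      have hm : i % (2 * r) = i := Nat.mod_eq_of_lt (by omega)
      simp only [ha, hm, if_pos hi]
    · rw [Finset.sum_Ico_eq_sum_range, show 2 * r - r = r by omega]
      refine Finset.sum_congr rfl fun i hi => ?_
      rw [Finset.mem_range] at hi
      have hm : (r + i) % (2 * r) = r + i := Nat.mod_eq_of_lt (by omega)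
      have hlt : ¬ (r + i) % (2 * r) < r := by omega
      simp only [ha, hm, if_neg (by omega : ¬ r + i < r)]
      rw [show r + i - r = i by omega, show 2 * r - 1 - (r + i) = r - 1 - i by omega]
  -- the real number in question
  have h3 : (0 : ℝ) < 3 := by norm_num
  have hpow : ∀ m : ℕ, (0 : ℝ) < 3 ^ m := fun m => pow_pos h3 m
  -- summability
  have hsum : Summable (fun i : ℕ => (a i : ℝ) / 3 ^ (i + 1)) := by
    refine Summable.of_nonneg_of_le (fun i => by positivity) (fun i => ?_)
      (((summable_geometric_of_lt_one (by norm_num) (by norm_num :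
        (1 : ℝ) / 3 < 1)).mul_left (2 / 3)))
    have h1 : ((1 : ℝ) / 3) ^ i = 1 / 3 ^ i := by rw [one_div_pow]
    rw [h1]
    rw [div_le_iff₀ (hpow (i + 1)), pow_succ]
    have : (a i : ℝ) ≤ 2 := by exact_mod_cast ha2 i
    calc (a i : ℝ) ≤ 2 := this
      _ = 2 / 3 * (1 / 3 ^ i) * (3 ^ i * 3) := by field_simp
  -- sum of one block
  have hblock : ∑ j : Fin (2 * r), (a (j : ℕ) : ℝ) / 3 ^ ((j : ℕ) + 1) =
      (N : ℝ) / 3 ^ (2 * r) := by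
    have : ∀ j : Fin (2 * r), (a (j : ℕ) : ℝ) / 3 ^ ((j : ℕ) + 1) =
        ((a (j : ℕ) * 3 ^ (2 * r - 1 - (j : ℕ)) : ℕ) : ℝ) / 3 ^ (2 * r) := by
      intro j
      push_cast
      rw [div_eq_div_iff (by positivity) (by positivity), mul_assoc, ← pow_add]
      congr 2
      have := j.isLt
      omega
    rw [Finset.sum_congr rfl fun j _ => this j, ← Finset.sum_div]
    congr 1
    norm_cast
    rw [Fin.sum_univ_eq_sum_range (fun i => a i * 3 ^ (2 * r - 1 - i)) (2 * r)]
    exact Nkey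
  -- compute the tsum
  have hr2 : 0 < 2 * r := by omega
  haveI : NeZero (2 * r) := ⟨by omega⟩
  have htsum : ∑' i : ℕ, (a i : ℝ) / 3 ^ (i + 1) = (N : ℝ) / (3 ^ (2 * r) - 1) := by
    set f : ℕ → ℝ := fun i => (a i : ℝ) / 3 ^ (i + 1) with hf
    have h1 : ∑' p : ℕ × Fin (2 * r), f (p.1 * (2 * r) + (p.2 : ℕ)) = ∑' i, f i := by
      have := ((Nat.divModEquiv (2 * r)).symm).tsum_eq f
      simpa [Nat.divModEquiv] using this
    have hsumf : Summable fun p : ℕ × Fin (2 * r) => f (p.1 * (2 * r) + (p.2 : ℕ)) := by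
      have := ((Nat.divModEquiv (2 * r)).symm.summable_iff (f := f)).mpr hsum
      simp [Nat.divModEquiv, Function.comp] at this
      exact this
    have hterm : ∀ (k : ℕ) (j : Fin (2 * r)),
        f (k * (2 * r) + (j : ℕ)) = ((3 ^ (2 * r) : ℝ)⁻¹) ^ k * ((a (j : ℕ) : ℝ) / 3 ^ ((j : ℕ) + 1)) := by
      intro k j
      have hmod : (k * (2 * r) + (j : ℕ)) % (2 * r) = (j : ℕ) := by
        rw [Nat.add_comm, Nat.add_mul_mod_self_right]
        exact Nat.mod_eq_of_lt j.isLt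
      have haeq : a (k * (2 * r) + (j : ℕ)) = a (j : ℕ) := by
        simp only [ha, hmod, Nat.mod_eq_of_lt j.isLt]
      rw [hf]
      simp only [haeq]
      rw [show k * (2 * r) + (j : ℕ) + 1 = 2 * r * k + ((j : ℕ) + 1) by ring, pow_add,
        pow_mul, ← inv_pow]
      field_simp
      rw [mul_assoc, ← mul_pow, one_div, inv_pow, mul_inv_cancel₀ (by positivity), one_pow, mul_one]
    rw [← h1, Summable.tsum_prod' hsumf (fun k => Summable.of_finite)]
    have h2 : ∀ k : ℕ, ∑' j : Fin (2 * r), f (k * (2 * r) + (j : ℕ)) =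
        ((3 ^ (2 * r) : ℝ)⁻¹) ^ k * ((N : ℝ) / 3 ^ (2 * r)) := by
      intro k
      rw [tsum_fintype, Finset.sum_congr rfl fun j _ => hterm k j, ← Finset.mul_sum, hblock]
    rw [tsum_congr h2, tsum_mul_right, tsum_geometric_of_lt_one (by positivity)
      (by rw [inv_lt_one_iff₀]; right; exact one_lt_pow₀ (by norm_num) (by omega))]
    have hne : (3 : ℝ) ^ (2 * r) - 1 ≠ 0 := by
      have : (1 : ℝ) < 3 ^ (2 * r) := one_lt_pow₀ (by norm_num) (by omega)
      linarith
    have hne2 : (3 : ℝ) ^ (2 * r) ≠ 0 := ne_of_gt (hpow _)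
    field_simp
  constructor
  · exact ⟨a, hadig, htsum.symm⟩
  -- the denominator part
  · set A : ℕ := ∑ j : Fin r, ω j * 3 ^ (r - 1 - (j : ℕ)) with hA
    have key2 : (N : ℤ) = ((A : ℤ) + 1) * (3 ^ r - 1) := by
      have hc : ∀ j : Fin r, ((2 - ω j : ℕ) : ℤ) = 2 - (ω j : ℤ) := by
        intro j; have := hω2 j; omega
      have hcast : (N : ℤ) = ∑ j : Fin r, (ω j : ℤ) * 3 ^ (2 * r - 1 - (j : ℕ)) +
          ∑ j : Fin r, (2 - (ω j : ℤ)) * 3 ^ (r - 1 - (j : ℕ)) := by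
        rw [hN]
        push_cast
        congr 1
        exact Finset.sum_congr rfl fun j _ => by rw [hc j]
      have hAcast : (A : ℤ) = ∑ j : Fin r, (ω j : ℤ) * 3 ^ (r - 1 - (j : ℕ)) := by
        rw [hA]; push_cast; rfl
      have hfirst : ∑ j : Fin r, (ω j : ℤ) * 3 ^ (2 * r - 1 - (j : ℕ)) =
          3 ^ r * ∑ j : Fin r, (ω j : ℤ) * 3 ^ (r - 1 - (j : ℕ)) := by
        rw [Finset.mul_sum]
        refine Finset.sum_congr rfl fun j _ => ?_
        rw [show (2 * r - 1 - (j : ℕ)) = r + (r - 1 - (j : ℕ)) by have := j.isLt; omega,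
          pow_add]
        ring
      have hsecond : ∑ j : Fin r, ((2 : ℤ) - (ω j : ℤ)) * 3 ^ (r - 1 - (j : ℕ)) =
          (3 ^ r - 1) - ∑ j : Fin r, (ω j : ℤ) * 3 ^ (r - 1 - (j : ℕ)) := by
        rw [Finset.sum_congr rfl (fun j _ => sub_mul (2 : ℤ) _ _), Finset.sum_sub_distrib]
        congr 1
        have hrev : ∑ j : Fin r, (2 : ℤ) * 3 ^ (r - 1 - (j : ℕ)) =
            ∑ i ∈ Finset.range r, 2 * 3 ^ (r - 1 - i) :=
          Fin.sum_univ_eq_sum_range (fun i => (2 : ℤ) * 3 ^ (r - 1 - i)) r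
        calc ∑ j : Fin r, (2 : ℤ) * 3 ^ (r - 1 - (j : ℕ))
            = ∑ i ∈ Finset.range r, (2 : ℤ) * 3 ^ (r - 1 - i) := hrev
          _ = ∑ i ∈ Finset.range r, (2 : ℤ) * 3 ^ i :=
              Finset.sum_range_reflect (fun i => (2 : ℤ) * 3 ^ i) r
          _ = (∑ i ∈ Finset.range r, (3 : ℤ) ^ i) * (3 - 1) := by
              rw [Finset.sum_mul]
              exact Finset.sum_congr rfl fun i _ => by ring
          _ = 3 ^ r - 1 := geom_sum_mul (3 : ℤ) r
      rw [hcast, hfirst, hsecond, hAcast]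
      ring
    have hden : (((N : ℚ)) / (3 ^ (2 * r) - 1)) =
        (((A : ℤ) + 1 : ℤ) : ℚ) / (((3 ^ r + 1 : ℤ)) : ℚ) := by
      have hNq : (N : ℚ) = ((A : ℚ) + 1) * (3 ^ r - 1) := by exact_mod_cast key2
      have hne1 : (3 : ℚ) ^ r - 1 ≠ 0 := by
        have : (1 : ℚ) < 3 ^ r := one_lt_pow₀ (by norm_num) (by omega)
        linarith
      have hne2 : (3 : ℚ) ^ r + 1 ≠ 0 := by positivity
      rw [hNq, show (3 : ℚ) ^ (2 * r) - 1 = (3 ^ r - 1) * (3 ^ r + 1) by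
        rw [two_mul, pow_add]; ring]
      push_cast
      rw [mul_comm ((3 : ℚ) ^ r - 1), mul_div_mul_right _ _ hne1]
    rw [hden]
    have hdvd := Rat.den_dvd ((A : ℤ) + 1) ((3 : ℤ) ^ r + 1)
    rw [Rat.divInt_eq_div] at hdvd
    have : ((((((A : ℤ) + 1 : ℤ) : ℚ) / (((3 ^ r + 1 : ℤ)) : ℚ)).den : ℤ)) ∣
        (((3 ^ r + 1 : ℕ) : ℤ)) := by
      convert hdvd using 2
      push_cast
      ring
    exact_mod_cast this
end

section
/- Let ω ∈ {0,2}^r, ω̄ its digit-swap (0↔2), and let 𝟎 denote the string of r zeros. Then the purely periodic base-3 number with repeating block ωω̄𝟎 (period 3r) is in the Cantor middle-thirds set and its reduced denominator divides 3^{2r} + 3^r + 1. -/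
private lemma periodic_tsum (p : ℕ) (hp : 0 < p) (b : ℕ → ℕ) :
    ∑' i : ℕ, ((b (i % p) : ℝ)) / 3 ^ (i + 1)
      = (∑ s ∈ Finset.range p, (b s : ℝ) * 3 ^ (p - 1 - s)) / (3 ^ p - 1) := by
  haveI : NeZero p := ⟨hp.ne'⟩
  have h3p : (0:ℝ) < 3 ^ p := by positivity
  set f : ℕ → ℝ := fun i => (b (i % p) : ℝ) / 3 ^ (i + 1) with hf
  have key : ∀ qs : ℕ × Fin p, f ((Nat.divModEquiv p).symm qs)
      = ((1/3:ℝ) ^ p) ^ qs.1 * ((b qs.2 : ℝ) / 3 ^ ((qs.2 : ℕ) + 1)) := by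
    rintro ⟨q, s⟩
    have hmod : (q * p + (s : ℕ)) % p = (s : ℕ) := by
      rw [add_comm, Nat.add_mul_mod_self_right, Nat.mod_eq_of_lt s.isLt]
    have hpow : (3:ℝ) ^ (q * p + (s : ℕ) + 1) = 3 ^ (p * q) * 3 ^ ((s : ℕ) + 1) := by
      rw [← pow_add]; ring_nf
    have hinv : ((1/3:ℝ) ^ p) ^ q = ((3:ℝ) ^ (p * q))⁻¹ := by
      rw [one_div, inv_pow, inv_pow, ← pow_mul]
    simp only [f, Nat.divModEquiv, Equiv.coe_fn_symm_mk, hmod, hpow, hinv]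
    have h1 : (0:ℝ) < 3 ^ (p * q) := by positivity
    have h2 : (0:ℝ) < 3 ^ ((s : ℕ) + 1) := by positivity
    field_simp
  have hlt1 : ((1/3:ℝ) ^ p) < 1 := pow_lt_one₀ (by norm_num) (by norm_num) hp.ne'
  have hgeo : Summable (fun q : ℕ => ((1/3:ℝ) ^ p) ^ q) :=
    summable_geometric_of_lt_one (by positivity) hlt1
  have hfin : Summable (fun s : Fin p => (b s : ℝ) / 3 ^ ((s : ℕ) + 1)) :=
    Summable.of_finite
  have hsum : Summable (fun qs : ℕ × Fin p => f ((Nat.divModEquiv p).symm qs)) :=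
    (hgeo.mul_of_nonneg hfin (fun q => by positivity) (fun s => by positivity)).congr
      (fun qs => (key qs).symm)
  rw [← Equiv.tsum_eq (Nat.divModEquiv p).symm f]
  rw [Summable.tsum_prod' hsum (fun q => Summable.of_finite)]
  have hinner : ∀ q : ℕ, ∑' s : Fin p, f ((Nat.divModEquiv p).symm (q, s))
      = ((1/3:ℝ) ^ p) ^ q * ∑ s : Fin p, (b s : ℝ) / 3 ^ ((s : ℕ) + 1) := by
    intro q
    rw [tsum_fintype, Finset.mul_sum]
    exact Finset.sum_congr rfl fun s _ => key (q, s)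
  simp only [hinner]
  rw [tsum_mul_right, tsum_geometric_of_lt_one (by positivity) hlt1]
  have hfin2 : ∑ s : Fin p, (b s : ℝ) / 3 ^ ((s : ℕ) + 1)
      = (∑ s ∈ Finset.range p, (b s : ℝ) * 3 ^ (p - 1 - s)) / 3 ^ p := by
    rw [Finset.sum_div]
    rw [Fin.sum_univ_eq_sum_range (fun s => (b s : ℝ) / 3 ^ (s + 1))]
    refine Finset.sum_congr rfl fun s hs => ?_
    have hs' : s < p := Finset.mem_range.mp hs
    have hsplit : (3:ℝ) ^ p = 3 ^ (p - 1 - s) * 3 ^ (s + 1) := by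
      rw [← pow_add]; congr 1; omega
    rw [hsplit]
    have h1 : (0:ℝ) < 3 ^ (p - 1 - s) := by positivity
    have h2 : (0:ℝ) < 3 ^ (s + 1) := by positivity
    field_simp
  rw [hfin2]
  have hne : (3:ℝ) ^ p - 1 ≠ 0 := by
    have : (1:ℝ) < 3 ^ p := one_lt_pow₀ (by norm_num) hp.ne'
    linarith
  have h13 : (1/3:ℝ) ^ p = ((3:ℝ) ^ p)⁻¹ := by rw [div_pow, one_pow, one_div]
  rw [h13]
  field_simp

/-- For `ω ∈ {0,2}^r` with digit-swap `ω̄` and `𝟎` the string of `r` zeros,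
the purely periodic base-3 number with repeating block `ωω̄𝟎` (period `3r`)
lies in the Cantor set and its reduced denominator divides `3^{2r}+3^r+1`. -/
theorem stmt_15 (r : ℕ) (hr : 0 < r) (ω : Fin r → ℕ) (hω : ∀ j, ω j = 0 ∨ ω j = 2) :
    ((((∑ j : Fin r, ω j * 3 ^ (3 * r - 1 - (j : ℕ)) +
        ∑ j : Fin r, (2 - ω j) * 3 ^ (2 * r - 1 - (j : ℕ)) : ℕ) : ℝ) /
          (3 ^ (3 * r) - 1)) ∈ cantorMiddleThirds) ∧
    (((∑ j : Fin r, ω j * 3 ^ (3 * r - 1 - (j : ℕ)) +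
        ∑ j : Fin r, (2 - ω j) * 3 ^ (2 * r - 1 - (j : ℕ)) : ℕ) : ℚ) /
          (3 ^ (3 * r) - 1)).den ∣ 3 ^ (2 * r) + 3 ^ r + 1 := by
  have hω2 : ∀ j : Fin r, 2 - ω j = 0 ∨ 2 - ω j = 2 := by
    intro j; rcases hω j with h | h <;> simp [h]
  set N : ℕ := ∑ j : Fin r, ω j * 3 ^ (3 * r - 1 - (j : ℕ)) +
      ∑ j : Fin r, (2 - ω j) * 3 ^ (2 * r - 1 - (j : ℕ)) with hN
  -- the block digits
  set blk : ℕ → ℕ := fun s =>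
    if h : s < r then ω ⟨s, h⟩
    else if h2 : s < 2 * r then 2 - ω ⟨s - r, by omega⟩ else 0 with hblk
  have hblk02 : ∀ s, blk s = 0 ∨ blk s = 2 := by
    intro s
    by_cases h1 : s < r
    · simp only [blk, dif_pos h1]; exact hω _
    · by_cases h2 : s < 2 * r
      · simp only [blk, dif_neg h1, dif_pos h2]; exact hω2 _
      · exact Or.inl (by simp only [blk, dif_neg h1, dif_neg h2])
  -- finite sum identity
  have hNsum : ∑ s ∈ Finset.range (3 * r), blk s * 3 ^ (3 * r - 1 - s) = N := by
    rw [Finset.range_eq_Ico, ← Finset.sum_Ico_consecutive _ (Nat.zero_le r)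
        (by omega : r ≤ 3 * r),
      ← Finset.sum_Ico_consecutive _ (by omega : r ≤ 2 * r) (by omega : 2 * r ≤ 3 * r)]
    have h1 : ∑ s ∈ Finset.Ico 0 r, blk s * 3 ^ (3 * r - 1 - s)
        = ∑ j : Fin r, ω j * 3 ^ (3 * r - 1 - (j : ℕ)) := by
      rw [← Finset.range_eq_Ico,
        ← Fin.sum_univ_eq_sum_range (fun s => blk s * 3 ^ (3 * r - 1 - s))]
      refine Finset.sum_congr rfl fun j _ => ?_
      simp only [blk, dif_pos j.isLt, Fin.eta]
    have h2 : ∑ s ∈ Finset.Ico r (2 * r), blk s * 3 ^ (3 * r - 1 - s)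
        = ∑ j : Fin r, (2 - ω j) * 3 ^ (2 * r - 1 - (j : ℕ)) := by
      rw [Finset.sum_Ico_eq_sum_range]
      have hrr : 2 * r - r = r := by omega
      rw [hrr, ← Fin.sum_univ_eq_sum_range
        (fun i => blk (r + i) * 3 ^ (3 * r - 1 - (r + i)))]
      refine Finset.sum_congr rfl fun j _ => ?_
      have hj := j.isLt
      have hb : blk (r + (j : ℕ)) = 2 - ω j := by
        simp only [blk]
        rw [dif_neg (by omega), dif_pos (by omega)]
        simp
      rw [hb]
      congr 2
      omega
    have h3 : ∑ s ∈ Finset.Ico (2 * r) (3 * r), blk s * 3 ^ (3 * r - 1 - s) = 0 := by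
      refine Finset.sum_eq_zero fun s hs => ?_
      rw [Finset.mem_Ico] at hs
      simp only [blk]
      rw [dif_neg (by omega), dif_neg (by omega)]
      ring
    rw [h1, h2, h3, hN]
    ring
  have h3r1 : 1 ≤ 3 ^ (3 * r) := Nat.one_le_pow _ _ (by norm_num)
  have hr1 : 1 ≤ 3 ^ r := Nat.one_le_pow _ _ (by norm_num)
  constructor
  · -- Cantor membership
    refine ⟨fun i => blk (i % (3 * r)), fun i => hblk02 _, ?_⟩
    rw [periodic_tsum (3 * r) (by omega) blk]
    have hcast : ∑ s ∈ Finset.range (3 * r), (blk s : ℝ) * 3 ^ (3 * r - 1 - s) = (N : ℝ) := by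
      rw [← hNsum]
      push_cast
      ring
    rw [hcast]
  · -- denominator divides
    set m : ℕ := 3 ^ r - 1 with hm
    set D : ℕ := 3 ^ (2 * r) + 3 ^ r + 1 with hD
    have hfactor : 3 ^ (3 * r) - 1 = m * D := by
      have hx : 3 ^ (3 * r) = 3 ^ r * 3 ^ r * 3 ^ r := by
        rw [show 3 * r = r + r + r by ring, pow_add, pow_add]
      rw [hx, hm, hD, show 2 * r = r + r by ring, pow_add]
      have h1 : 1 ≤ 3 ^ r * 3 ^ r * 3 ^ r := Nat.one_le_iff_ne_zero.mpr (by positivity)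
      zify [hr1, h1]
      ring
    have hmz : (m : ℤ) = 3 ^ r - 1 := by
      rw [hm]; push_cast [hr1]; ring
    -- m ∣ N
    have hmdvd : m ∣ N := by
      rw [← Int.natCast_dvd_natCast]
      have hNz : (N : ℤ) = ∑ j : Fin r, ((ω j : ℤ) * 3 ^ (3 * r - 1 - (j : ℕ)) +
          ((2 - ω j : ℕ) : ℤ) * 3 ^ (2 * r - 1 - (j : ℕ))) := by
        rw [hN, Finset.sum_add_distrib]; push_cast; ring
      set S : ℤ := ∑ j : Fin r, (2 : ℤ) * 3 ^ (r - 1 - (j : ℕ)) with hS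
      have hSval : S = 3 ^ r - 1 := by
        rw [hS, ← Finset.mul_sum,
          Fin.sum_univ_eq_sum_range (fun k => (3:ℤ) ^ (r - 1 - k)),
          Finset.sum_range_reflect (fun k => (3:ℤ) ^ k) r]
        have := geom_sum_mul (3:ℤ) r
        linarith
      have hdiff : (m : ℤ) ∣ ((N : ℤ) - S) := by
        rw [hNz, hS, ← Finset.sum_sub_distrib]
        refine Finset.dvd_sum fun j _ => ?_
        have hj := j.isLt
        have he3 : 3 * r - 1 - (j : ℕ) = 2 * r + (r - 1 - (j : ℕ)) := by omega
        have he2 : 2 * r - 1 - (j : ℕ) = r + (r - 1 - (j : ℕ)) := by omega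
        have hc : (ω j : ℤ) + ((2 - ω j : ℕ) : ℤ) = 2 := by
          rcases hω j with h | h <;> simp [h]
        have hterm : (ω j : ℤ) * 3 ^ (3 * r - 1 - (j : ℕ)) +
            ((2 - ω j : ℕ) : ℤ) * 3 ^ (2 * r - 1 - (j : ℕ)) - 2 * 3 ^ (r - 1 - (j : ℕ))
            = (ω j : ℤ) * (3 ^ (2 * r) - 1) * 3 ^ (r - 1 - (j : ℕ)) +
              ((2 - ω j : ℕ) : ℤ) * (3 ^ r - 1) * 3 ^ (r - 1 - (j : ℕ)) := by
          rw [he3, he2, pow_add, pow_add]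
          linear_combination (3:ℤ) ^ (r - 1 - (j : ℕ)) * hc
        rw [hterm, hmz]
        have d1 : ((3:ℤ) ^ r - 1) ∣ (3 ^ (2 * r) - 1) :=
          ⟨3 ^ r + 1, by rw [two_mul, pow_add]; ring⟩
        exact dvd_add ((d1.mul_left _).mul_right _) ((dvd_refl _).mul_left _ |>.mul_right _)
      have hNdec : (N : ℤ) = ((N : ℤ) - S) + S := by ring
      rw [hNdec]
      exact dvd_add hdiff (by rw [hSval, ← hmz])
    obtain ⟨M, hM⟩ := hmdvd
    have hmpos : 0 < m := by
      have h3 : 3 ≤ 3 ^ r := by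
        calc 3 = 3 ^ 1 := (pow_one 3).symm
        _ ≤ 3 ^ r := Nat.pow_le_pow_right (by norm_num) hr
      omega
    have hq : ((N : ℚ) / (3 ^ (3 * r) - 1)) = (M : ℚ) / (D : ℚ) := by
      have hc : ((3:ℚ) ^ (3 * r) - 1) = ((3 ^ (3 * r) - 1 : ℕ) : ℚ) := by
        push_cast [h3r1]; ring
      rw [hc, hfactor, hM]
      push_cast
      rw [mul_div_mul_left _ _ (show (m:ℚ) ≠ 0 by exact_mod_cast hmpos.ne')]
    rw [hq]
    have hden := Rat.den_dvd (M : ℤ) (D : ℤ)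
    rw [Rat.divInt_eq_div] at hden
    have hcast2 : ((M : ℤ) : ℚ) / ((D : ℤ) : ℚ) = (M : ℚ) / (D : ℚ) := by push_cast; ring
    rw [hcast2] at hden
    exact_mod_cast hden
end
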